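/- arXiv:2102.11564 — 8 statements merged into one kernel-verified Lean document; each statement's English description precedes it below -/
import Mathlib

section
/- Let P be the cubic Hermite interpolant on [x_i, x_{i+1}] of the data (f_i, ḟ_i), (f_{i+1}, ḟ_{i+1}). If P is monotone nondecreasing on [x_i, x_{i+1}], then m_i ≥ 0, ḟ_i ≥ 0 and ḟ_{i+1} ≥ 0; symmetrically, if P is monotone nonincreasing on [x_i, x_{i+1}], then m_i ≤ 0, ḟ_i ≤ 0 and ḟ_{i+1} ≤ 0 (so ḟ_i, ḟ_{i+1} and m_i all have the same sign). Moreover, if m_i = 0, then P is monotone on [x_i, x_{i+1}] if and only if ḟ_i = ḟ_{i+1} = 0, in which case P is constant on [x_i, x_{i+1}]. -/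
/-- The cubic Hermite interpolant on `[xi, xip]` of the data
`(fi, di)`, `(fip, dip)` (values and derivatives at the endpoints). -/
noncomputable def hermite (xi xip fi fip di dip : ℝ) : ℝ → ℝ := fun t =>
  fi + di * (t - xi)
    + (((fip - fi) / (xip - xi) - di) / (xip - xi)) * (t - xi) ^ 2
    + ((dip + di - 2 * ((fip - fi) / (xip - xi))) / (xip - xi) ^ 2)
        * (t - xi) ^ 2 * (t - xip)

open Set Filter Topology

lemma hermite_left (xi xip fi fip di dip : ℝ) :
    hermite xi xip fi fip di dip xi = fi := by
  simp [hermite]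

lemma hermite_right (xi xip fi fip di dip : ℝ) (hne : xip - xi ≠ 0) :
    hermite xi xip fi fip di dip xip = fip := by
  simp only [hermite]
  field_simp
  ring

lemma hermite_mono_key (xi xip fi fip di dip : ℝ) (hx : xi < xip)
    (hm : MonotoneOn (hermite xi xip fi fip di dip) (Set.Icc xi xip)) :
    0 ≤ (fip - fi) / (xip - xi) ∧ 0 ≤ di ∧ 0 ≤ dip := by
  have hpos : (0:ℝ) < xip - xi := by linarith
  have hne : xip - xi ≠ 0 := ne_of_gt hpos
  set P := hermite xi xip fi fip di dip with hP
  have hfi : P xi = fi := hermite_left ..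
  have hfip : P xip = fip := hermite_right _ _ _ _ _ _ hne
  have hfle : fi ≤ fip := by
    have := hm (left_mem_Icc.2 hx.le) (right_mem_Icc.2 hx.le) hx.le
    rwa [hfi, hfip] at this
  refine ⟨div_nonneg (by linarith) hpos.le, ?_, ?_⟩
  · -- di ≥ 0 via slope at left endpoint
    set g : ℝ → ℝ := fun t => di + (((fip - fi) / (xip - xi) - di) / (xip - xi)) * (t - xi)
      + ((dip + di - 2 * ((fip - fi) / (xip - xi))) / (xip - xi) ^ 2) * (t - xi) * (t - xip)
      with hg
    have hgc : Continuous g := by fun_prop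
    have hgxi : g xi = di := by simp [hg]
    have htend : Tendsto g (𝓝[>] xi) (𝓝 di) := by
      rw [← hgxi]
      exact (hgc.tendsto xi).mono_left nhdsWithin_le_nhds
    refine ge_of_tendsto htend ?_
    filter_upwards [Ioc_mem_nhdsGT hx] with t ht
    have hfact : (t - xi) * g t = P t - fi := by
      simp only [hg, hP, hermite]; ring
    have hPle : fi ≤ P t := by
      have := hm (left_mem_Icc.2 hx.le) ⟨ht.1.le, ht.2⟩ ht.1.le
      rwa [hfi] at this
    have htpos : 0 < t - xi := by linarith [ht.1]
    have : 0 ≤ (t - xi) * g t := by rw [hfact]; linarith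
    exact nonneg_of_mul_nonneg_right this htpos
  · -- dip ≥ 0 via slope at right endpoint
    set g : ℝ → ℝ := fun t => di + (((fip - fi) / (xip - xi) - di) / (xip - xi)) * ((xip - xi) + (t - xi))
      + ((dip + di - 2 * ((fip - fi) / (xip - xi))) / (xip - xi) ^ 2) * (t - xi) ^ 2
      with hg
    have hgc : Continuous g := by fun_prop
    have hgxip : g xip = dip := by
      simp only [hg]
      field_simp
      ring
    have htend : Tendsto g (𝓝[<] xip) (𝓝 dip) := by
      rw [← hgxip]
      exact (hgc.tendsto xip).mono_left nhdsWithin_le_nhds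
    refine ge_of_tendsto htend ?_
    filter_upwards [Ico_mem_nhdsLT hx] with t ht
    have hfact : (xip - t) * g t = fip - P t := by
      have : fip = P xip := hfip.symm
      rw [this]
      simp only [hg, hP, hermite]; ring
    have hPle : P t ≤ fip := by
      have := hm ⟨ht.1, ht.2.le⟩ (right_mem_Icc.2 hx.le) ht.2.le
      rwa [hfip] at this
    have htpos : 0 < xip - t := by linarith [ht.2]
    have : 0 ≤ (xip - t) * g t := by rw [hfact]; linarith
    exact nonneg_of_mul_nonneg_right this htpos

/-- Necessary conditions for monotonicity of a cubic Hermite interpolant. -/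
theorem hermite_monotone_necessary (xi xip fi fip di dip : ℝ) (hx : xi < xip) :
    (MonotoneOn (hermite xi xip fi fip di dip) (Set.Icc xi xip) →
      0 ≤ (fip - fi) / (xip - xi) ∧ 0 ≤ di ∧ 0 ≤ dip) ∧
    (AntitoneOn (hermite xi xip fi fip di dip) (Set.Icc xi xip) →
      (fip - fi) / (xip - xi) ≤ 0 ∧ di ≤ 0 ∧ dip ≤ 0) ∧
    ((fip - fi) / (xip - xi) = 0 →
      ((MonotoneOn (hermite xi xip fi fip di dip) (Set.Icc xi xip) ∨
          AntitoneOn (hermite xi xip fi fip di dip) (Set.Icc xi xip)) ↔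
        (di = 0 ∧ dip = 0)) ∧
      (di = 0 → dip = 0 →
        ∀ t ∈ Set.Icc xi xip, hermite xi xip fi fip di dip t = fi)) := by
  have hpos : (0:ℝ) < xip - xi := by linarith
  have hne : xip - xi ≠ 0 := ne_of_gt hpos
  have hneg : ∀ t, hermite xi xip (-fi) (-fip) (-di) (-dip) t
      = - hermite xi xip fi fip di dip t := by
    intro t; simp only [hermite]; ring
  have anti_key : AntitoneOn (hermite xi xip fi fip di dip) (Set.Icc xi xip) →
      (fip - fi) / (xip - xi) ≤ 0 ∧ di ≤ 0 ∧ dip ≤ 0 := by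
    intro ha
    have hmono : MonotoneOn (hermite xi xip (-fi) (-fip) (-di) (-dip)) (Set.Icc xi xip) := by
      intro a hA b hB hab
      simp only [hneg]
      exact neg_le_neg (ha hA hB hab)
    obtain ⟨h1, h2, h3⟩ := hermite_mono_key xi xip (-fi) (-fip) (-di) (-dip) hx hmono
    have : (-fip - -fi) / (xip - xi) = -((fip - fi)/(xip - xi)) := by ring
    rw [this] at h1
    exact ⟨by linarith, by linarith, by linarith⟩
  -- constancy implies derivatives vanish (when slope is 0)
  have const_imp : (fip - fi) / (xip - xi) = 0 →
      (∀ t ∈ Set.Icc xi xip, hermite xi xip fi fip di dip t = fi) →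
      di = 0 ∧ dip = 0 := by
    intro hm0 hc
    have hfe : fip = fi := by
      have := (div_eq_zero_iff.1 hm0).resolve_right hne
      linarith
    have e1 := hc (xi + (xip - xi)/2) ⟨by linarith, by linarith⟩
    have e2 := hc (xi + (xip - xi)/4) ⟨by linarith, by linarith⟩
    have i1 : hermite xi xip fi fip di dip (xi + (xip - xi)/2) - fi
        = (xip - xi) * (di - dip) / 8 := by
      rw [hfe]; simp only [hermite]; field_simp; ring
    have i2 : hermite xi xip fi fip di dip (xi + (xip - xi)/4) - fi
        = 3 * ((xip - xi) * (3 * di - dip)) / 64 := by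
      rw [hfe]; simp only [hermite]; field_simp; ring
    rw [e1] at i1
    rw [e2] at i2
    have k1 : (xip - xi) * (di - dip) = 0 := by linarith
    have k2 : (xip - xi) * (3 * di - dip) = 0 := by linarith
    have k1' : di - dip = 0 := (mul_eq_zero.1 k1).resolve_left hne
    have k2' : 3 * di - dip = 0 := (mul_eq_zero.1 k2).resolve_left hne
    constructor <;> linarith
  have const_of : (fip - fi) / (xip - xi) = 0 → di = 0 → dip = 0 →
      ∀ t ∈ Set.Icc xi xip, hermite xi xip fi fip di dip t = fi := by
    intro hm0 hdi hdip t _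
    have hfe : fip = fi := by
      have := (div_eq_zero_iff.1 hm0).resolve_right hne
      linarith
    subst hfe hdi hdip
    simp [hermite]
  refine ⟨hermite_mono_key xi xip fi fip di dip hx, anti_key, fun hm0 => ⟨?_, const_of hm0⟩⟩
  constructor
  · rintro (hmono | hanti)
    · -- monotone with zero slope ⇒ constant
      have hfe : fip = fi := by
        have := (div_eq_zero_iff.1 hm0).resolve_right hne
        linarith
      have hc : ∀ t ∈ Set.Icc xi xip, hermite xi xip fi fip di dip t = fi := by
        intro t ht
        have h1 := hmono (left_mem_Icc.2 hx.le) ht ht.1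
        have h2 := hmono ht (right_mem_Icc.2 hx.le) ht.2
        rw [hermite_left] at h1
        rw [hermite_right _ _ _ _ _ _ hne] at h2
        linarith
      exact const_imp hm0 hc
    · have hfe : fip = fi := by
        have := (div_eq_zero_iff.1 hm0).resolve_right hne
        linarith
      have hc : ∀ t ∈ Set.Icc xi xip, hermite xi xip fi fip di dip t = fi := by
        intro t ht
        have h1 := hanti (left_mem_Icc.2 hx.le) ht ht.1
        have h2 := hanti ht (right_mem_Icc.2 hx.le) ht.2
        rw [hermite_left] at h1
        rw [hermite_right _ _ _ _ _ _ hne] at h2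
        linarith
      exact const_imp hm0 hc
  · rintro ⟨hdi, hdip⟩
    left
    intro a hA b hB hab
    rw [const_of hm0 hdi hdip a hA, const_of hm0 hdi hdip b hB]
end

section
/- Let P be the cubic Hermite interpolant on [x_i, x_{i+1}] of the data (f_i, ḟ_i), (f_{i+1}, ḟ_{i+1}), suppose m_i ≠ 0, and set α_i = ḟ_i/m_i and β_i = ḟ_{i+1}/m_i. If 0 ≤ α_i ≤ 3 and 0 ≤ β_i ≤ 3, then P is monotone on [x_i, x_{i+1}]: nondecreasing if m_i > 0 and nonincreasing if m_i < 0. -/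
lemma hermite_key (a b u h : ℝ) (hu0 : 0 ≤ u) (huh : u ≤ h)
    (ha0 : 0 ≤ a) (ha3 : a ≤ 3) (hb0 : 0 ≤ b) (hb3 : b ≤ 3) :
    0 ≤ a*h^2 + 2*(1-a)*h*u + (a+b-2)*(3*u^2-2*h*u) := by
  rcases le_or_gt (a+b) 3 with hab | hab
  · nlinarith [mul_nonneg (mul_nonneg hu0 (sub_nonneg.2 huh)) (by linarith : (0:ℝ) ≤ 3-a-b),
      mul_nonneg ha0 (sq_nonneg (h-u)), mul_nonneg hb0 (sq_nonneg u)]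
  · nlinarith [mul_nonneg (mul_nonneg hu0 (sub_nonneg.2 huh)) (by linarith : (0:ℝ) ≤ 3-a),
      mul_nonneg (mul_nonneg hu0 (sub_nonneg.2 huh)) (by linarith : (0:ℝ) ≤ 3-b),
      sq_nonneg (h-2*u), mul_nonneg ha0 (sq_nonneg (h-u)), mul_nonneg hb0 (sq_nonneg u),
      mul_nonneg (mul_nonneg hu0 (sub_nonneg.2 huh)) (by linarith : (0:ℝ) ≤ a+b-3)]

lemma hermite_hasDerivAt (xi xip fi fip di dip t : ℝ) :
    HasDerivAt (hermite xi xip fi fip di dip)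
      (di + (((fip - fi) / (xip - xi) - di) / (xip - xi)) * (2 * (t - xi))
        + ((dip + di - 2 * ((fip - fi) / (xip - xi))) / (xip - xi) ^ 2)
            * (2 * (t - xi) * (t - xip) + (t - xi) ^ 2)) t := by
  have h1 : HasDerivAt (fun s : ℝ => s - xi) 1 t := (hasDerivAt_id t).sub_const xi
  have h2 : HasDerivAt (fun s : ℝ => s - xip) 1 t := (hasDerivAt_id t).sub_const xip
  have hsq : HasDerivAt (fun s : ℝ => (s - xi) ^ 2) (2 * (t - xi)) t := by
    simpa using h1.fun_pow 2
  have hcube : HasDerivAt (fun s : ℝ => (s - xi) ^ 2 * (s - xip))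
      (2 * (t - xi) * (t - xip) + (t - xi) ^ 2) t := by
    simpa using hsq.fun_mul h2
  have := (((hasDerivAt_const t fi).add (h1.const_mul di)).add
      (hsq.const_mul (((fip - fi) / (xip - xi) - di) / (xip - xi)))).add
      (hcube.const_mul ((dip + di - 2 * ((fip - fi) / (xip - xi))) / (xip - xi) ^ 2))
  convert this using 1
  · rfl
  · rfl
  · ext s; simp [hermite]; ring
  · ring

/-- Sufficient conditions (de Boor–Swartz) for monotonicity of a cubic
Hermite interpolant: if `0 ≤ α = ḟᵢ/mᵢ ≤ 3` and `0 ≤ β = ḟᵢ₊₁/mᵢ ≤ 3`,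
the interpolant is monotone on `[xᵢ, xᵢ₊₁]`. -/
theorem hermite_monotone_sufficient (xi xip fi fip di dip m : ℝ) (hx : xi < xip)
    (hm : m = (fip - fi) / (xip - xi)) (hm0 : m ≠ 0)
    (hα0 : 0 ≤ di / m) (hα3 : di / m ≤ 3)
    (hβ0 : 0 ≤ dip / m) (hβ3 : dip / m ≤ 3) :
    (0 < m → MonotoneOn (hermite xi xip fi fip di dip) (Set.Icc xi xip)) ∧
    (m < 0 → AntitoneOn (hermite xi xip fi fip di dip) (Set.Icc xi xip)) := by
  have hh : (0:ℝ) < xip - xi := by linarith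
  have hne : xip - xi ≠ 0 := ne_of_gt hh
  have hdi : di = (di / m) * m := (div_mul_cancel₀ di hm0).symm
  have hdip : dip = (dip / m) * m := (div_mul_cancel₀ dip hm0).symm
  have hfe : fip - fi = m * (xip - xi) := by
    rw [hm]; field_simp
  -- the derivative value
  set D : ℝ → ℝ := fun t =>
      di + (((fip - fi) / (xip - xi) - di) / (xip - xi)) * (2 * (t - xi))
        + ((dip + di - 2 * ((fip - fi) / (xip - xi))) / (xip - xi) ^ 2)
            * (2 * (t - xi) * (t - xip) + (t - xi) ^ 2) with hD
  have hderiv : ∀ t, deriv (hermite xi xip fi fip di dip) t = D t := fun t =>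
    (hermite_hasDerivAt xi xip fi fip di dip t).deriv
  have hcont : ContinuousOn (hermite xi xip fi fip di dip) (Set.Icc xi xip) :=
    (Differentiable.continuous fun t =>
      (hermite_hasDerivAt xi xip fi fip di dip t).differentiableAt).continuousOn
  have hdiff : DifferentiableOn ℝ (hermite xi xip fi fip di dip)
      (interior (Set.Icc xi xip)) := fun t _ =>
    (hermite_hasDerivAt xi xip fi fip di dip t).differentiableAt.differentiableWithinAt
  have hDval : ∀ t, D t = m * ((di/m) * (xip - xi)^2 + 2*(1 - di/m)*(xip - xi)*(t - xi)
      + (di/m + dip/m - 2)*(3*(t - xi)^2 - 2*(xip - xi)*(t - xi))) / (xip - xi)^2 := by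
    intro t
    rw [hD]
    simp only
    rw [hfe]
    rw [hdi, hdip]
    field_simp
    ring
  have hQ : ∀ t ∈ interior (Set.Icc xi xip),
      0 ≤ (di/m) * (xip - xi)^2 + 2*(1 - di/m)*(xip - xi)*(t - xi)
      + (di/m + dip/m - 2)*(3*(t - xi)^2 - 2*(xip - xi)*(t - xi)) := by
    intro t ht
    rw [interior_Icc] at ht
    exact hermite_key (di/m) (dip/m) (t - xi) (xip - xi)
      (by linarith [ht.1]) (by linarith [ht.2]) hα0 hα3 hβ0 hβ3
  constructor
  · intro hmp
    apply monotoneOn_of_deriv_nonneg (convex_Icc xi xip) hcont hdiff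
    intro t ht
    rw [hderiv t, hDval t]
    exact div_nonneg (mul_nonneg hmp.le (hQ t ht)) (sq_nonneg _)
  · intro hmn
    apply antitoneOn_of_deriv_nonpos (convex_Icc xi xip) hcont hdiff
    intro t ht
    rw [hderiv t, hDval t]
    exact div_nonpos_of_nonpos_of_nonneg
      (mul_nonpos_of_nonpos_of_nonneg hmn.le (hQ t ht)) (sq_nonneg _)
end

section
/- Let x_1 < x_2 < … < x_n, let f_1, …, f_n be nondecreasing data in the sense that m_i = (f_{i+1} − f_i)/(x_{i+1} − x_i) ≥ 0 for all 1 ≤ i ≤ n−1, and let ḟ_2, …, ḟ_{n−1} satisfy 0 ≤ ḟ_i ≤ 3·min(m_{i−1}, m_i) for all 2 ≤ i ≤ n−1. Then for every 2 ≤ i ≤ n−2 the cubic Hermite interpolant on [x_i, x_{i+1}] of the data (f_i, ḟ_i), (f_{i+1}, ḟ_{i+1}) is nondecreasing on [x_i, x_{i+1}]. -/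
lemma key_ineq (m di dip u v : ℝ) (hu : 0 ≤ u) (hv : 0 ≤ v) (hm : 0 ≤ m)
    (hdi0 : 0 ≤ di) (hdi3 : di ≤ 3 * m) (hdip0 : 0 ≤ dip) (hdip3 : dip ≤ 3 * m) :
    0 ≤ di * v ^ 2 + dip * u ^ 2 + (6 * m - 2 * di - 2 * dip) * u * v := by
  rcases eq_or_lt_of_le hm with h0 | h0
  · have e1 : di = 0 := le_antisymm (by linarith) hdi0
    have e2 : dip = 0 := le_antisymm (by linarith) hdip0
    rw [e1, e2, ← h0]; norm_num
  · have a1 : 0 ≤ 3 * m - di := by linarith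
    have a2 : 0 ≤ 3 * m - dip := by linarith
    have hsum : 0 ≤ (3 * m - di) * (3 * m - dip) * (2 * (u * v))
        + di * (3 * m - dip) * v ^ 2 + (3 * m - di) * dip * u ^ 2
        + di * dip * (u - v) ^ 2 := by
      have b1 := mul_nonneg (mul_nonneg a1 a2) (by positivity : (0:ℝ) ≤ 2 * (u * v))
      have b2 := mul_nonneg (mul_nonneg hdi0 a2) (sq_nonneg v)
      have b3 := mul_nonneg (mul_nonneg a1 hdip0) (sq_nonneg u)
      have b4 := mul_nonneg (mul_nonneg hdi0 hdip0) (sq_nonneg (u - v))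
      linarith
    nlinarith [hsum, h0]

/-- Global sufficient condition for monotonicity: if the data are nondecreasing
and `0 ≤ ḟᵢ ≤ 3·min(mᵢ₋₁, mᵢ)` for `2 ≤ i ≤ n−1`, then the cubic Hermite
interpolant is nondecreasing on each `[xᵢ, xᵢ₊₁]` for `2 ≤ i ≤ n−2`. -/
theorem hermite_monotone_global (n : ℕ) (x f df : ℕ → ℝ) (hn : 4 ≤ n)
    (hx : ∀ i, 1 ≤ i → i ≤ n - 1 → x i < x (i + 1))
    (hmono : ∀ i, 1 ≤ i → i ≤ n - 1 → 0 ≤ (f (i + 1) - f i) / (x (i + 1) - x i))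
    (hdf : ∀ i, 2 ≤ i → i ≤ n - 1 →
      0 ≤ df i ∧ df i ≤ 3 * min ((f i - f (i - 1)) / (x i - x (i - 1)))
        ((f (i + 1) - f i) / (x (i + 1) - x i))) :
    ∀ i, 2 ≤ i → i ≤ n - 2 →
      MonotoneOn (hermite (x i) (x (i + 1)) (f i) (f (i + 1)) (df i) (df (i + 1)))
        (Set.Icc (x i) (x (i + 1))) := by
  intro i hi2 hin
  have hxlt : x i < x (i + 1) := hx i (by omega) (by omega)
  have hh : (0:ℝ) < x (i + 1) - x i := by linarith
  set xi := x i
  set xip := x (i + 1)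
  set m : ℝ := (f (i + 1) - f i) / (xip - xi) with hm
  have hm0 : 0 ≤ m := hmono i (by omega) (by omega)
  have hdfi := hdf i (by omega) (by omega)
  have hdfip := hdf (i + 1) (by omega) (by omega)
  simp only [Nat.add_sub_cancel] at hdfip
  have hdi0 : 0 ≤ df i := hdfi.1
  have hdi3 : df i ≤ 3 * m := le_trans hdfi.2 (by
    have := min_le_right ((f i - f (i - 1)) / (x i - x (i - 1))) m
    linarith)
  have hdip0 : 0 ≤ df (i + 1) := hdfip.1
  have hdip3 : df (i + 1) ≤ 3 * m := le_trans hdfip.2 (by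
    have := min_le_left m ((f (i + 1 + 1) - f (i + 1)) / (x (i + 1 + 1) - x (i + 1)))
    linarith)
  apply monotoneOn_of_deriv_nonneg (convex_Icc _ _)
  · exact Continuous.continuousOn (by
      have : Continuous (hermite xi xip (f i) (f (i+1)) (df i) (df (i+1))) := by
        apply continuous_iff_continuousAt.mpr
        intro t
        exact (hermite_hasDerivAt xi xip (f i) (f (i+1)) (df i) (df (i+1)) t).continuousAt
      exact this)
  · intro t ht
    exact (hermite_hasDerivAt xi xip (f i) (f (i+1)) (df i)
      (df (i+1)) t).differentiableAt.differentiableWithinAt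
  · intro t ht
    have ht' : t ∈ Set.Icc xi xip := by
      rw [interior_Icc] at ht
      exact Set.mem_Icc_of_Ioo ht
    obtain ⟨ht1, ht2⟩ := ht'
    have hD := hermite_hasDerivAt xi xip (f i) (f (i+1)) (df i) (df (i+1)) t
    rw [hD.deriv]
    set u := t - xi with hu'
    set v := xip - t with hv'
    have hu : 0 ≤ u := by rw [hu']; linarith
    have hv : 0 ≤ v := by rw [hv']; linarith
    have hE := key_ineq m (df i) (df (i+1)) u v hu hv hm0 hdi0 hdi3 hdip0 hdip3
    have heq : df i + ((m - df i) / (xip - xi)) * (2 * (t - xi))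
        + ((df (i+1) + df i - 2 * m) / (xip - xi) ^ 2)
          * (2 * (t - xi) * (t - xip) + (t - xi) ^ 2)
        = (df i * v ^ 2 + df (i+1) * u ^ 2 + (6 * m - 2 * df i - 2 * df (i+1)) * u * v)
            / (xip - xi) ^ 2 := by
      have hxx : xip - xi = u + v := by rw [hu', hv']; ring
      have hne : xip - xi ≠ 0 := ne_of_gt hh
      field_simp
      rw [hxx]
      ring
    rw [← hm, heq]
    positivity
end

section
/- Let f be four times continuously differentiable on [x_i, x_{i+1}] with |f⁽⁴⁾(x)| ≤ L for all x ∈ [x_i, x_{i+1}], set f_i = f(x_i), f_{i+1} = f(x_{i+1}), and let ḟ_i, ḟ_{i+1} ∈ ℝ satisfy |ḟ_i − f'(x_i)| ≤ ε_i and |ḟ_{i+1} − f'(x_{i+1})| ≤ ε_{i+1}. Then the cubic Hermite interpolant P of the data (f_i, ḟ_i), (f_{i+1}, ḟ_{i+1}) satisfies, for every x ∈ [x_i, x_{i+1}], |P(x) − f(x)| ≤ L·h_i⁴/384 + h_i·(ε_i + ε_{i+1}). In particular, if ε_i = O(h_i^{q_i}) and ε_{i+1} = O(h_i^{q_{i+1}}),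 then P approximates f on [x_i, x_{i+1}] with order min(4, q_i + 1, q_{i+1} + 1). -/
open Set

private lemma p4_hasDerivAt (c0 c1 c2 c3 c4 x : ℝ) :
    HasDerivAt (fun y : ℝ => c0 + c1*y + c2*y^2 + c3*y^3 + c4*y^4)
      (c1 + (2*c2)*x + (3*c3)*x^2 + (4*c4)*x^3 + 0*x^4) x := by
  have h1 : HasDerivAt (fun y : ℝ => c1 * y) c1 x := by
    simpa using (hasDerivAt_id x).const_mul c1
  have h2 := (hasDerivAt_pow 2 x).const_mul c2
  have h3 := (hasDerivAt_pow 3 x).const_mul c3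
  have h4 := (hasDerivAt_pow 4 x).const_mul c4
  have h := ((((hasDerivAt_const x c0).add h1).add h2).add h3).add h4
  refine h.congr_deriv ?_
  push_cast
  ring

private lemma exists_four_deriv (xi xip t c0 c1 c2 c3 c4 : ℝ) (f : ℝ → ℝ)
    (hx : xi < xip) (ht : t ∈ Set.Ioo xi xip)
    (hf : ContDiffOn ℝ 4 f (Set.Icc xi xip))
    (h0i : f xi = c0 + c1*xi + c2*xi^2 + c3*xi^3 + c4*xi^4)
    (h0t : f t = c0 + c1*t + c2*t^2 + c3*t^3 + c4*t^4)
    (h0p : f xip = c0 + c1*xip + c2*xip^2 + c3*xip^3 + c4*xip^4)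
    (h1i : derivWithin f (Set.Icc xi xip) xi = c1 + 2*c2*xi + 3*c3*xi^2 + 4*c4*xi^3)
    (h1p : derivWithin f (Set.Icc xi xip) xip = c1 + 2*c2*xip + 3*c3*xip^2 + 4*c4*xip^3) :
    ∃ e ∈ Set.Ioo xi xip, iteratedDerivWithin 4 f (Set.Icc xi xip) e = 24*c4 := by
  have hs : UniqueDiffOn ℝ (Set.Icc xi xip) := uniqueDiffOn_Icc hx
  have hmi : xi ∈ Set.Icc xi xip := ⟨le_rfl, hx.le⟩
  have hmp : xip ∈ Set.Icc xi xip := ⟨hx.le, le_rfl⟩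
  -- derivative facts at interior points
  have hfd : ∀ k : ℕ, k < 4 → ∀ x ∈ Set.Ioo xi xip,
      HasDerivAt (iteratedDerivWithin k f (Set.Icc xi xip))
        (iteratedDerivWithin (k+1) f (Set.Icc xi xip) x) x := by
    intro k hk x hx'
    have hxm : x ∈ Set.Icc xi xip := Set.Ioo_subset_Icc_self hx'
    have hmem : Set.Icc xi xip ∈ nhds x := Icc_mem_nhds hx'.1 hx'.2
    have hd : DifferentiableWithinAt ℝ (iteratedDerivWithin k f (Set.Icc xi xip))
        (Set.Icc xi xip) x :=
      hf.differentiableOn_iteratedDerivWithin (by exact_mod_cast hk) hs x hxm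
    have h := (hd.differentiableAt hmem).hasDerivAt
    rwa [← derivWithin_of_mem_nhds hmem, ← iteratedDerivWithin_succ] at h
  have hfd0 : ∀ x ∈ Set.Ioo xi xip,
      HasDerivAt f (iteratedDerivWithin 1 f (Set.Icc xi xip) x) x := by
    intro x hx'
    have := hfd 0 (by norm_num) x hx'
    rwa [iteratedDerivWithin_zero] at this
  -- continuity facts
  have hc0 : ContinuousOn f (Set.Icc xi xip) := hf.continuousOn
  have hck : ∀ k : ℕ, k ≤ 4 →
      ContinuousOn (iteratedDerivWithin k f (Set.Icc xi xip)) (Set.Icc xi xip) := by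
    intro k hk
    exact hf.continuousOn_iteratedDerivWithin (by exact_mod_cast hk) hs
  -- Rolle helper
  have rolle : ∀ (F F' : ℝ → ℝ), ContinuousOn F (Set.Icc xi xip) →
      (∀ x ∈ Set.Ioo xi xip, HasDerivAt F (F' x) x) →
      ∀ a b, a ∈ Set.Icc xi xip → b ∈ Set.Icc xi xip → a < b → F a = 0 → F b = 0 →
      ∃ c ∈ Set.Ioo a b, F' c = 0 := by
    intro F F' hFc hFd a b ha hb hab hFa hFb
    exact exists_hasDerivAt_eq_zero hab (hFc.mono (Set.Icc_subset_Icc ha.1 hb.2))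
      (by rw [hFa, hFb]) (fun x hx' => hFd x (Set.Ioo_subset_Ioo ha.1 hb.2 hx'))
  -- the functions G0..G4
  set s := Set.Icc xi xip with hsdef
  have der0 : ∀ x ∈ Set.Ioo xi xip, HasDerivAt
      (fun y : ℝ => f y - (c0 + c1*y + c2*y^2 + c3*y^3 + c4*y^4))
      (iteratedDerivWithin 1 f s x - (c1 + (2*c2)*x + (3*c3)*x^2 + (4*c4)*x^3 + 0*x^4)) x :=
    fun x hx' => (hfd0 x hx').sub (p4_hasDerivAt c0 c1 c2 c3 c4 x)
  have der1 : ∀ x ∈ Set.Ioo xi xip, HasDerivAt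
      (fun y : ℝ => iteratedDerivWithin 1 f s y - (c1 + (2*c2)*y + (3*c3)*y^2 + (4*c4)*y^3 + 0*y^4))
      (iteratedDerivWithin 2 f s x -
        ((2*c2) + (2*(3*c3))*x + (3*(4*c4))*x^2 + (4*0)*x^3 + 0*x^4)) x :=
    fun x hx' => (hfd 1 (by norm_num) x hx').sub (p4_hasDerivAt c1 (2*c2) (3*c3) (4*c4) 0 x)
  have der2 : ∀ x ∈ Set.Ioo xi xip, HasDerivAt
      (fun y : ℝ => iteratedDerivWithin 2 f s y -
        ((2*c2) + (2*(3*c3))*y + (3*(4*c4))*y^2 + (4*0)*y^3 + 0*y^4))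
      (iteratedDerivWithin 3 f s x -
        ((2*(3*c3)) + (2*(3*(4*c4)))*x + (3*(4*0))*x^2 + (4*0)*x^3 + 0*x^4)) x :=
    fun x hx' => (hfd 2 (by norm_num) x hx').sub (p4_hasDerivAt (2*c2) (2*(3*c3)) (3*(4*c4)) (4*0) 0 x)
  have der3 : ∀ x ∈ Set.Ioo xi xip, HasDerivAt
      (fun y : ℝ => iteratedDerivWithin 3 f s y -
        ((2*(3*c3)) + (2*(3*(4*c4)))*y + (3*(4*0))*y^2 + (4*0)*y^3 + 0*y^4))
      (iteratedDerivWithin 4 f s x -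
        ((2*(3*(4*c4))) + (2*(3*(4*0)))*x + (3*(4*0))*x^2 + (4*0)*x^3 + 0*x^4)) x :=
    fun x hx' => (hfd 3 (by norm_num) x hx').sub
      (p4_hasDerivAt (2*(3*c3)) (2*(3*(4*c4))) (3*(4*0)) (4*0) 0 x)
  have polyc : ∀ a0 a1 a2 a3 a4 : ℝ,
      Continuous (fun y : ℝ => a0 + a1*y + a2*y^2 + a3*y^3 + a4*y^4) := by
    intro a0 a1 a2 a3 a4; fun_prop
  have cont0 : ContinuousOn (fun y : ℝ => f y - (c0 + c1*y + c2*y^2 + c3*y^3 + c4*y^4)) s :=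
    hc0.sub (polyc _ _ _ _ _).continuousOn
  have cont1 : ContinuousOn
      (fun y : ℝ => iteratedDerivWithin 1 f s y - (c1 + (2*c2)*y + (3*c3)*y^2 + (4*c4)*y^3 + 0*y^4)) s :=
    (hck 1 (by norm_num)).sub (polyc _ _ _ _ _).continuousOn
  have cont2 : ContinuousOn
      (fun y : ℝ => iteratedDerivWithin 2 f s y -
        ((2*c2) + (2*(3*c3))*y + (3*(4*c4))*y^2 + (4*0)*y^3 + 0*y^4)) s :=
    (hck 2 (by norm_num)).sub (polyc _ _ _ _ _).continuousOn
  have cont3 : ContinuousOn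
      (fun y : ℝ => iteratedDerivWithin 3 f s y -
        ((2*(3*c3)) + (2*(3*(4*c4)))*y + (3*(4*0))*y^2 + (4*0)*y^3 + 0*y^4)) s :=
    (hck 3 (by norm_num)).sub (polyc _ _ _ _ _).continuousOn
  -- zeros of G0 and G1 at endpoints
  have hG1i : iteratedDerivWithin 1 f s xi - (c1 + (2*c2)*xi + (3*c3)*xi^2 + (4*c4)*xi^3 + 0*xi^4) = 0 := by
    rw [iteratedDerivWithin_one]
    rw [h1i]; ring
  have hG1p : iteratedDerivWithin 1 f s xip - (c1 + (2*c2)*xip + (3*c3)*xip^2 + (4*c4)*xip^3 + 0*xip^4) = 0 := by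
    rw [iteratedDerivWithin_one]
    rw [h1p]; ring
  have htm : t ∈ s := Set.Ioo_subset_Icc_self ht
  -- Rolle chain
  obtain ⟨a1, ha1, hGa1⟩ := rolle _ _ cont0 der0 xi t hmi htm ht.1
    (by simp [h0i]) (by simp [h0t])
  obtain ⟨b1, hb1, hGb1⟩ := rolle _ _ cont0 der0 t xip htm hmp ht.2
    (by simp [h0t]) (by simp [h0p])
  have ha1' : a1 ∈ Set.Ioo xi xip := ⟨ha1.1, ha1.2.trans ht.2⟩
  have hb1' : b1 ∈ Set.Ioo xi xip := ⟨ht.1.trans hb1.1, hb1.2⟩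
  obtain ⟨e1, he1, hGe1⟩ := rolle _ _ cont1 der1 xi a1 hmi (Set.Ioo_subset_Icc_self ha1')
    ha1.1 hG1i hGa1
  obtain ⟨e2, he2, hGe2⟩ := rolle _ _ cont1 der1 a1 b1 (Set.Ioo_subset_Icc_self ha1')
    (Set.Ioo_subset_Icc_self hb1') (ha1.2.trans hb1.1) hGa1 hGb1
  obtain ⟨e3, he3, hGe3⟩ := rolle _ _ cont1 der1 b1 xip (Set.Ioo_subset_Icc_self hb1')
    hmp hb1.2 hGb1 hG1p
  have he1' : e1 ∈ Set.Ioo xi xip := ⟨he1.1, he1.2.trans ha1'.2⟩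
  have he2' : e2 ∈ Set.Ioo xi xip := ⟨ha1'.1.trans he2.1, he2.2.trans hb1'.2⟩
  have he3' : e3 ∈ Set.Ioo xi xip := ⟨hb1'.1.trans he3.1, he3.2⟩
  obtain ⟨u1, hu1, hGu1⟩ := rolle _ _ cont2 der2 e1 e2 (Set.Ioo_subset_Icc_self he1')
    (Set.Ioo_subset_Icc_self he2') (he1.2.trans he2.1) hGe1 hGe2
  obtain ⟨u2, hu2, hGu2⟩ := rolle _ _ cont2 der2 e2 e3 (Set.Ioo_subset_Icc_self he2')
    (Set.Ioo_subset_Icc_self he3') (he2.2.trans he3.1) hGe2 hGe3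
  have hu1' : u1 ∈ Set.Ioo xi xip := ⟨he1'.1.trans hu1.1, hu1.2.trans he2'.2⟩
  have hu2' : u2 ∈ Set.Ioo xi xip := ⟨he2'.1.trans hu2.1, hu2.2.trans he3'.2⟩
  obtain ⟨v, hv, hGv⟩ := rolle _ _ cont3 der3 u1 u2 (Set.Ioo_subset_Icc_self hu1')
    (Set.Ioo_subset_Icc_self hu2') (hu1.2.trans hu2.1) hGu1 hGu2
  have hv' : v ∈ Set.Ioo xi xip := ⟨hu1'.1.trans hv.1, hv.2.trans hu2'.2⟩
  refine ⟨v, hv', ?_⟩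
  have := hGv
  ring_nf at this ⊢
  linarith


set_option maxHeartbeats 2000000 in
private lemma hermite_exact (xi xip L : ℝ) (f : ℝ → ℝ) (hx : xi < xip)
    (hf : ContDiffOn ℝ 4 f (Set.Icc xi xip))
    (hL : ∀ t ∈ Set.Icc xi xip, |iteratedDerivWithin 4 f (Set.Icc xi xip) t| ≤ L) :
    ∀ t ∈ Set.Icc xi xip,
      |hermite xi xip (f xi) (f xip) (derivWithin f (Set.Icc xi xip) xi)
          (derivWithin f (Set.Icc xi xip) xip) t - f t|
        ≤ L * (xip - xi) ^ 4 / 384 := by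
  intro t ht
  have hne : xip - xi ≠ 0 := sub_ne_zero.2 hx.ne'
  have hL0 : 0 ≤ L := (abs_nonneg _).trans (hL xi ⟨le_rfl, hx.le⟩)
  have hrhs : 0 ≤ L * (xip - xi) ^ 4 / 384 :=
    div_nonneg (mul_nonneg hL0 (by positivity)) (by norm_num)
  rcases eq_or_lt_of_le ht.1 with h1 | h1
  · have h : hermite xi xip (f xi) (f xip) (derivWithin f (Set.Icc xi xip) xi)
        (derivWithin f (Set.Icc xi xip) xip) t = f t := by
      rw [← h1]; simp [hermite]
    rw [h]; simpa using hrhs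
  rcases eq_or_lt_of_le ht.2 with h2 | h2
  · have h : hermite xi xip (f xi) (f xip) (derivWithin f (Set.Icc xi xip) xi)
        (derivWithin f (Set.Icc xi xip) xip) t = f t := by
      rw [h2]; simp only [hermite]; field_simp; ring
    rw [h]; simpa using hrhs
  -- interior case
  have hw1 : (0:ℝ) < t - xi := by linarith
  have hw2 : (0:ℝ) < xip - t := by linarith
  have hwne : (t - xi)^2 * (t - xip)^2 ≠ 0 :=
    mul_ne_zero (pow_ne_zero _ hw1.ne') (pow_ne_zero _ (sub_ne_zero.2 h2.ne))
  set A := f xi with hA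
  set B := derivWithin f (Set.Icc xi xip) xi with hB
  set Dp := derivWithin f (Set.Icc xi xip) xip with hDp
  set Cc := ((f xip - f xi) / (xip - xi) - B) / (xip - xi) with hCc
  set Dd := (Dp + B - 2 * ((f xip - f xi) / (xip - xi))) / (xip - xi) ^ 2 with hDd
  set K := (f t - hermite xi xip (f xi) (f xip) B Dp t) / ((t - xi)^2 * (t - xip)^2) with hK
  have hKw : f t - hermite xi xip (f xi) (f xip) B Dp t = K * ((t - xi)^2 * (t - xip)^2) := by
    rw [hK, div_mul_cancel₀ _ hwne]
  have hh0i : f xi = (A - B*xi + Cc*xi^2 - Dd*xi^2*xip + K*xi^2*xip^2)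
      + (B - 2*Cc*xi + Dd*(xi^2 + 2*xi*xip) - 2*K*(xi*xip^2 + xi^2*xip))*xi
      + (Cc - Dd*(2*xi + xip) + K*(xi^2 + 4*xi*xip + xip^2))*xi^2
      + (Dd - 2*K*(xi + xip))*xi^3 + K*xi^4 := by ring
  have hh0t : f t = (A - B*xi + Cc*xi^2 - Dd*xi^2*xip + K*xi^2*xip^2)
      + (B - 2*Cc*xi + Dd*(xi^2 + 2*xi*xip) - 2*K*(xi*xip^2 + xi^2*xip))*t
      + (Cc - Dd*(2*xi + xip) + K*(xi^2 + 4*xi*xip + xip^2))*t^2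
      + (Dd - 2*K*(xi + xip))*t^3 + K*t^4 := by
    have hpoly : (A - B*xi + Cc*xi^2 - Dd*xi^2*xip + K*xi^2*xip^2)
        + (B - 2*Cc*xi + Dd*(xi^2 + 2*xi*xip) - 2*K*(xi*xip^2 + xi^2*xip))*t
        + (Cc - Dd*(2*xi + xip) + K*(xi^2 + 4*xi*xip + xip^2))*t^2
        + (Dd - 2*K*(xi + xip))*t^3 + K*t^4
        = hermite xi xip (f xi) (f xip) B Dp t + K * ((t - xi)^2 * (t - xip)^2) := by
      rw [hCc, hDd]; simp only [hermite]; ring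
    linarith
  have hh0p : f xip = (A - B*xi + Cc*xi^2 - Dd*xi^2*xip + K*xi^2*xip^2)
      + (B - 2*Cc*xi + Dd*(xi^2 + 2*xi*xip) - 2*K*(xi*xip^2 + xi^2*xip))*xip
      + (Cc - Dd*(2*xi + xip) + K*(xi^2 + 4*xi*xip + xip^2))*xip^2
      + (Dd - 2*K*(xi + xip))*xip^3 + K*xip^4 := by
    rw [hCc, hDd]; field_simp; ring
  have hh1i : derivWithin f (Set.Icc xi xip) xi
      = (B - 2*Cc*xi + Dd*(xi^2 + 2*xi*xip) - 2*K*(xi*xip^2 + xi^2*xip))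
      + 2*(Cc - Dd*(2*xi + xip) + K*(xi^2 + 4*xi*xip + xip^2))*xi
      + 3*(Dd - 2*K*(xi + xip))*xi^2 + 4*K*xi^3 := by
    rw [← hB]; ring
  have hh1p : derivWithin f (Set.Icc xi xip) xip
      = (B - 2*Cc*xi + Dd*(xi^2 + 2*xi*xip) - 2*K*(xi*xip^2 + xi^2*xip))
      + 2*(Cc - Dd*(2*xi + xip) + K*(xi^2 + 4*xi*xip + xip^2))*xip
      + 3*(Dd - 2*K*(xi + xip))*xip^2 + 4*K*xip^3 := by
    rw [← hDp, hCc, hDd]; field_simp; ring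
  obtain ⟨e, he, h24⟩ := exists_four_deriv xi xip t
    (A - B*xi + Cc*xi^2 - Dd*xi^2*xip + K*xi^2*xip^2)
    (B - 2*Cc*xi + Dd*(xi^2 + 2*xi*xip) - 2*K*(xi*xip^2 + xi^2*xip))
    (Cc - Dd*(2*xi + xip) + K*(xi^2 + 4*xi*xip + xip^2))
    (Dd - 2*K*(xi + xip)) K f hx ⟨h1, h2⟩ hf hh0i hh0t hh0p hh1i hh1p
  have hfe := hL e (Set.Ioo_subset_Icc_self he)
  rw [h24] at hfe
  have hKb : |K| ≤ L / 24 := by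
    have h24' : (24:ℝ) * |K| ≤ L := by
      rwa [abs_mul, show |(24:ℝ)| = 24 by norm_num] at hfe
    linarith
  have hab : (t - xi) * (xip - t) ≤ (xip - xi)^2 / 4 := by
    nlinarith [sq_nonneg ((t - xi) - (xip - t))]
  have hsq : ((t - xi) * (xip - t))^2 ≤ ((xip - xi)^2 / 4)^2 := by
    have := mul_pos hw1 hw2
    nlinarith
  have hwb : (t - xi)^2 * (t - xip)^2 ≤ (xip - xi)^4 / 16 := by nlinarith
  have hwpos : (0:ℝ) ≤ (t - xi)^2 * (t - xip)^2 := by positivity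
  have heq : hermite xi xip (f xi) (f xip) B Dp t - f t
      = -(K * ((t - xi)^2 * (t - xip)^2)) := by linarith
  rw [heq, abs_neg, abs_mul, abs_of_nonneg hwpos]
  calc |K| * ((t - xi)^2 * (t - xip)^2) ≤ (L/24) * ((xip - xi)^4 / 16) :=
        mul_le_mul hKb hwb hwpos (by linarith)
    _ = L * (xip - xi)^4 / 384 := by ring

/-- Error bound for cubic Hermite interpolation with perturbed derivative data:
if `f ∈ C⁴([xᵢ, xᵢ₊₁])` with `|f⁽⁴⁾| ≤ L` and the derivative data are within
`εᵢ`, `εᵢ₊₁` of `f'(xᵢ)`, `f'(xᵢ₊₁)`, then the interpolation error is at most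
`L·h⁴/384 + h·(εᵢ + εᵢ₊₁)`; in particular, with `εᵢ = O(h^{qᵢ})` the order of
approximation is `min(4, qᵢ + 1, qᵢ₊₁ + 1)`. -/
theorem hermite_error_bound (xi xip L εi εip di dip : ℝ) (f : ℝ → ℝ) (hx : xi < xip)
    (hf : ContDiffOn ℝ 4 f (Set.Icc xi xip))
    (hL : ∀ t ∈ Set.Icc xi xip, |iteratedDerivWithin 4 f (Set.Icc xi xip) t| ≤ L)
    (hdi : |di - derivWithin f (Set.Icc xi xip) xi| ≤ εi)
    (hdip : |dip - derivWithin f (Set.Icc xi xip) xip| ≤ εip) :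
    ∀ t ∈ Set.Icc xi xip,
      |hermite xi xip (f xi) (f xip) di dip t - f t|
        ≤ L * (xip - xi) ^ 4 / 384 + (xip - xi) * (εi + εip) := by
  intro t ht
  have hh : (0:ℝ) < xip - xi := by linarith
  have hne : xip - xi ≠ 0 := hh.ne'
  have hεi0 : 0 ≤ εi := (abs_nonneg _).trans hdi
  have hεip0 : 0 ≤ εip := (abs_nonneg _).trans hdip
  set Di := derivWithin f (Set.Icc xi xip) xi with hDi
  set Dip := derivWithin f (Set.Icc xi xip) xip with hDip
  have hex := hermite_exact xi xip L f hx hf hL t ht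
  have habs1 : |t - xi| ≤ xip - xi := abs_le.2 ⟨by linarith [ht.1], by linarith [ht.2]⟩
  have habs2 : |t - xip| ≤ xip - xi := abs_le.2 ⟨by linarith [ht.1], by linarith [ht.2]⟩
  have hpert : hermite xi xip (f xi) (f xip) di dip t
      - hermite xi xip (f xi) (f xip) Di Dip t
      = (di - Di) * ((t - xi) * (t - xip)^2 / (xip - xi)^2)
        + (dip - Dip) * ((t - xi)^2 * (t - xip) / (xip - xi)^2) := by
    simp only [hermite]; field_simp; ring
  have hb1 : |(t - xi) * (t - xip)^2 / (xip - xi)^2| ≤ xip - xi := by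
    rw [abs_div, abs_mul, abs_pow, abs_pow, abs_of_pos hh, div_le_iff₀ (by positivity)]
    have h2sq : |t - xip|^2 ≤ (xip - xi)^2 := by nlinarith [abs_nonneg (t - xip)]
    nlinarith [abs_nonneg (t - xi), abs_nonneg (t - xip)]
  have hb2 : |(t - xi)^2 * (t - xip) / (xip - xi)^2| ≤ xip - xi := by
    rw [abs_div, abs_mul, abs_pow, abs_pow, abs_of_pos hh, div_le_iff₀ (by positivity)]
    have h1sq : |t - xi|^2 ≤ (xip - xi)^2 := by nlinarith [abs_nonneg (t - xi)]
    nlinarith [abs_nonneg (t - xi), abs_nonneg (t - xip)]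
  have hp1 : |(di - Di) * ((t - xi) * (t - xip)^2 / (xip - xi)^2)| ≤ εi * (xip - xi) := by
    rw [abs_mul]
    exact mul_le_mul hdi hb1 (abs_nonneg _) hεi0
  have hp2 : |(dip - Dip) * ((t - xi)^2 * (t - xip) / (xip - xi)^2)| ≤ εip * (xip - xi) := by
    rw [abs_mul]
    exact mul_le_mul hdip hb2 (abs_nonneg _) hεip0
  have hptotal : |hermite xi xip (f xi) (f xip) di dip t
      - hermite xi xip (f xi) (f xip) Di Dip t| ≤ εi * (xip - xi) + εip * (xip - xi) := by
    rw [hpert]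
    exact (abs_add_le _ _).trans (add_le_add hp1 hp2)
  calc |hermite xi xip (f xi) (f xip) di dip t - f t|
      ≤ |hermite xi xip (f xi) (f xip) di dip t - hermite xi xip (f xi) (f xip) Di Dip t|
        + |hermite xi xip (f xi) (f xip) Di Dip t - f t| := abs_sub_le _ _ _
    _ ≤ (εi * (xip - xi) + εip * (xip - xi)) + L * (xip - xi) ^ 4 / 384 :=
        add_le_add hptotal hex
    _ = L * (xip - xi) ^ 4 / 384 + (xip - xi) * (εi + εip) := by ring
end

section
/- Let f be four times continuously differentiable on [x_1, x_n] with |f⁽⁴⁾(x)| ≤ L for all x ∈ [x_1, x_n], and suppose there exists K > 0 such that ĥ/h_j ≤ K for all 1 ≤ j ≤ n−1. For 2 ≤ i ≤ n−1 define R(i) = 3·λ_{i−1}·m_{i−1} + 3·μ_{i−1}·m_i − λ_{i−1}·f'(x_{i−1}) − 2·f'(x_i) − μ_{i−1}·f'(x_{i+1}). Then for every 2 ≤ i ≤ n−1, |R(i)| ≤ ((17K + K²)/16 + 1)·L·ĥ³. -/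
/-- Mesh spacing `hᵢ = xᵢ₊₁ − xᵢ`. -/
noncomputable def hstep (x : ℕ → ℝ) (i : ℕ) : ℝ := x (i + 1) - x i

/-- Divided difference `mᵢ = (f(xᵢ₊₁) − f(xᵢ))/hᵢ`. -/
noncomputable def mslope (x : ℕ → ℝ) (f : ℝ → ℝ) (i : ℕ) : ℝ :=
  (f (x (i + 1)) - f (x i)) / (x (i + 1) - x i)

/-- `λᵢ = hᵢ₊₁/(hᵢ + hᵢ₊₁)`. -/
noncomputable def lamb (x : ℕ → ℝ) (i : ℕ) : ℝ :=
  hstep x (i + 1) / (hstep x i + hstep x (i + 1))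

/-- `μᵢ = hᵢ/(hᵢ + hᵢ₊₁)`. -/
noncomputable def mub (x : ℕ → ℝ) (i : ℕ) : ℝ :=
  hstep x i / (hstep x i + hstep x (i + 1))

section Aux
open Set
lemma iterTransfer {f : ℝ → ℝ} {s t : Set ℝ} (hst : s ⊆ t) (hs : UniqueDiffOn ℝ s)
    (ht : UniqueDiffOn ℝ t) {N : WithTop ℕ∞} (hf : ContDiffOn ℝ N f t) :
    ∀ j : ℕ, (j : WithTop ℕ∞) ≤ N → ∀ y ∈ s,
      iteratedDerivWithin j f s y = iteratedDerivWithin j f t y := by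
  intro j
  induction j with
  | zero => intro _ y _; simp
  | succ j IH =>
    intro hj y hy
    have hjN : (j : WithTop ℕ∞) < N := lt_of_lt_of_le (by exact_mod_cast Nat.lt_succ_self j) hj
    rw [iteratedDerivWithin_succ, iteratedDerivWithin_succ,
      derivWithin_congr (fun z hz => IH hjN.le z hz) (IH hjN.le y hy)]
    exact derivWithin_subset hst (hs y hy)
      (hf.differentiableOn_iteratedDerivWithin hjN ht y (hst hy))

lemma taylor3 {f : ℝ → ℝ} {A B L : ℝ}
    (hf : ContDiffOn ℝ 4 f (Set.Icc A B))
    (hLb : ∀ t ∈ Set.Icc A B, |iteratedDerivWithin 4 f (Set.Icc A B) t| ≤ L)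
    {u v : ℝ} (hu : u ∈ Set.Icc A B) (hv : v ∈ Set.Icc A B) (huv : u < v) :
    |f v - (f u + derivWithin f (Set.Icc A B) u * (v - u)
        + iteratedDerivWithin 2 f (Set.Icc A B) u * (v - u) ^ 2 / 2
        + iteratedDerivWithin 3 f (Set.Icc A B) u * (v - u) ^ 3 / 6)|
      ≤ L * (v - u) ^ 4 / 24 := by
  have hABlt : A < B := lt_of_le_of_lt hu.1 (lt_of_lt_of_le huv hv.2)
  have hsU : UniqueDiffOn ℝ (Set.Icc A B) := uniqueDiffOn_Icc hABlt
  have hIU : UniqueDiffOn ℝ (Set.Icc u v) := uniqueDiffOn_Icc huv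
  have hIs : Set.Icc u v ⊆ Set.Icc A B := Set.Icc_subset_Icc hu.1 hv.2
  have tr := iterTransfer hIs hIU hsU hf
  have humem : u ∈ Set.Icc u v := Set.left_mem_Icc.2 huv.le
  have hfI : ContDiffOn ℝ (3:ℕ) f (Set.Icc u v) := (hf.mono hIs).of_le (by norm_num)
  have hdiff : DifferentiableOn ℝ (iteratedDerivWithin 3 f (Set.Icc u v)) (Set.Ioo u v) :=
    ((hf.mono hIs).differentiableOn_iteratedDerivWithin (by norm_num) hIU).mono
      Set.Ioo_subset_Icc_self
  obtain ⟨ξ, hξ, hEq⟩ := taylor_mean_remainder_lagrange (n := 3) (f := f) huv.ne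
    (by rwa [Set.uIcc_of_le huv.le]) (by rwa [Set.uIcc_of_le huv.le, Set.uIoo_of_le huv.le])
  rw [Set.uIcc_of_le huv.le] at hEq
  rw [Set.uIoo_of_le huv.le] at hξ
  have hT : taylorWithinEval f 3 (Set.Icc u v) u v
      = f u + derivWithin f (Set.Icc A B) u * (v - u)
        + iteratedDerivWithin 2 f (Set.Icc A B) u * (v - u) ^ 2 / 2
        + iteratedDerivWithin 3 f (Set.Icc A B) u * (v - u) ^ 3 / 6 := by
    rw [taylor_within_apply]
    have h0 : iteratedDerivWithin 0 f (Set.Icc u v) u = f u := by simp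
    have h1 : iteratedDerivWithin 1 f (Set.Icc u v) u
        = derivWithin f (Set.Icc A B) u := by
      rw [tr 1 (by norm_num) u humem, iteratedDerivWithin_one]
    have h2 := tr 2 (by norm_num) u humem
    have h3 := tr 3 (by norm_num) u humem
    simp [Finset.sum_range_succ, h0, h1, h2, h3, Nat.factorial]
    ring
  rw [← hT, hEq]
  have hξ' : ξ ∈ Set.Icc u v := Set.Ioo_subset_Icc_self hξ
  rw [tr 4 le_rfl ξ hξ']
  have hb := hLb ξ (hIs hξ')
  have hvu : (0:ℝ) ≤ v - u := by linarith
  rw [abs_div, abs_mul, abs_pow, abs_of_nonneg hvu]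
  have h24 : |(((3 + 1).factorial : ℕ) : ℝ)| = 24 := by norm_num [Nat.factorial]
  rw [h24]
  have h4 : (3 + 1) = 4 := by norm_num
  rw [h4]
  have hp : (0:ℝ) ≤ (v-u)^4/24 := by positivity
  calc |iteratedDerivWithin 4 f (Set.Icc A B) ξ| * (v - u) ^ 4 / 24
      ≤ L * (v - u) ^ 4 / 24 := by
        rw [div_le_div_iff₀ (by norm_num) (by norm_num)]
        nlinarith [pow_nonneg hvu 4, abs_nonneg (iteratedDerivWithin 4 f (Set.Icc A B) ξ)]

lemma taylor2 {g : ℝ → ℝ} {A B M : ℝ}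
    (hg : ContDiffOn ℝ 3 g (Set.Icc A B))
    (hMb : ∀ t ∈ Set.Icc A B, |iteratedDerivWithin 3 g (Set.Icc A B) t| ≤ M)
    {u v : ℝ} (hu : u ∈ Set.Icc A B) (hv : v ∈ Set.Icc A B) (huv : u < v) :
    |g v - (g u + derivWithin g (Set.Icc A B) u * (v - u)
        + iteratedDerivWithin 2 g (Set.Icc A B) u * (v - u) ^ 2 / 2)|
      ≤ M * (v - u) ^ 3 / 6 := by
  have hABlt : A < B := lt_of_le_of_lt hu.1 (lt_of_lt_of_le huv hv.2)
  have hsU : UniqueDiffOn ℝ (Set.Icc A B) := uniqueDiffOn_Icc hABlt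
  have hIU : UniqueDiffOn ℝ (Set.Icc u v) := uniqueDiffOn_Icc huv
  have hIs : Set.Icc u v ⊆ Set.Icc A B := Set.Icc_subset_Icc hu.1 hv.2
  have tr := iterTransfer hIs hIU hsU hg
  have humem : u ∈ Set.Icc u v := Set.left_mem_Icc.2 huv.le
  have hfI : ContDiffOn ℝ (2:ℕ) g (Set.Icc u v) := (hg.mono hIs).of_le (by norm_num)
  have hdiff : DifferentiableOn ℝ (iteratedDerivWithin 2 g (Set.Icc u v)) (Set.Ioo u v) :=
    ((hg.mono hIs).differentiableOn_iteratedDerivWithin (by norm_num) hIU).mono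
      Set.Ioo_subset_Icc_self
  obtain ⟨ξ, hξ, hEq⟩ := taylor_mean_remainder_lagrange (n := 2) (f := g) huv.ne
    (by rwa [Set.uIcc_of_le huv.le]) (by rwa [Set.uIcc_of_le huv.le, Set.uIoo_of_le huv.le])
  rw [Set.uIcc_of_le huv.le] at hEq
  rw [Set.uIoo_of_le huv.le] at hξ
  have hT : taylorWithinEval g 2 (Set.Icc u v) u v
      = g u + derivWithin g (Set.Icc A B) u * (v - u)
        + iteratedDerivWithin 2 g (Set.Icc A B) u * (v - u) ^ 2 / 2 := by
    rw [taylor_within_apply]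
    have h0 : iteratedDerivWithin 0 g (Set.Icc u v) u = g u := by simp
    have h1 : iteratedDerivWithin 1 g (Set.Icc u v) u
        = derivWithin g (Set.Icc A B) u := by
      rw [tr 1 (by norm_num) u humem, iteratedDerivWithin_one]
    have h2 := tr 2 (by norm_num) u humem
    simp [Finset.sum_range_succ, h0, h1, h2, Nat.factorial]
    ring
  rw [← hT, hEq]
  have hξ' : ξ ∈ Set.Icc u v := Set.Ioo_subset_Icc_self hξ
  rw [tr 3 le_rfl ξ hξ']
  have hb := hMb ξ (hIs hξ')
  have hvu : (0:ℝ) ≤ v - u := by linarith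
  rw [abs_div, abs_mul, abs_pow, abs_of_nonneg hvu]
  have h6 : |(((2 + 1).factorial : ℕ) : ℝ)| = 6 := by norm_num [Nat.factorial]
  rw [h6]
  have h3 : (2 + 1) = 3 := by norm_num
  rw [h3]
  rw [div_le_div_iff₀ (by norm_num) (by norm_num)]
  nlinarith [pow_nonneg hvu 3, abs_nonneg (iteratedDerivWithin 3 g (Set.Icc A B) ξ)]

lemma arithP1 {h k H : ℝ} (hh : 0 < h) (hk : 0 < k) (h1 : h ≤ H) (k1 : k ≤ H) :
    2*h*((h+k)^4+h^4) ≤ 17*H^4*(h+k) := by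
  have hH : 0 < H := lt_of_lt_of_le hh h1
  have q0 : 0 ≤ (2*H - (H+k)) * (2*(H+k)^3 + 4*H*(H+k)^2 + 8*H^2*(H+k) - H^3) := by
    apply mul_nonneg (by linarith)
    nlinarith [pow_pos (show (0:ℝ) < H+k by linarith) 3, sq_nonneg (H+k), mul_pos hH hk]
  have P0 : 0 ≤ 17*H^4*(H+k) - 2*H*((H+k)^4+H^4) := by nlinarith [q0]
  have m1 : 0 ≤ (H - h) * (17*H^4*k) := mul_nonneg (by linarith) (by positivity)
  have m2 : 0 ≤ h * (17*H^4*(H+k) - 2*H*((H+k)^4+H^4)) := mul_nonneg hh.le P0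
  have m3 : 0 ≤ 2*H*h*((H+k)^4 - (h+k)^4) := by
    apply mul_nonneg (by positivity)
    have : (h+k)^4 ≤ (H+k)^4 := by
      apply pow_le_pow_left₀ (by linarith) (by linarith)
    linarith
  have m4 : 0 ≤ 2*H*h*(H^4 - h^4) := by
    apply mul_nonneg (by positivity)
    have : h^4 ≤ H^4 := pow_le_pow_left₀ hh.le h1 4
    linarith
  nlinarith [m1, m2, m3, m4, hH]

lemma arithG1 {h k H : ℝ} (hh : 0 < h) (hk : 0 < k) (h1 : h ≤ H) (k1 : k ≤ H) :
    6*k*h^3 + 16*h^3*(h+k) + 8*h*(h+k)^3 ≤ 51*H^3*(h+k) := by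
  have hH : 0 < H := lt_of_lt_of_le hh h1
  have b1 : h^4 ≤ H^3*h := by nlinarith [pow_le_pow_left₀ hh.le h1 3]
  have b2 : h^3*k ≤ H^3*h := by nlinarith [mul_le_mul (pow_le_pow_left₀ hh.le h1 2) k1 hk.le (by positivity : (0:ℝ) ≤ H^2), hh]
  have b3 : h^3*k ≤ H^3*k := by nlinarith [pow_le_pow_left₀ hh.le h1 3, hk]
  have b4 : h^2*k^2 ≤ H^3*h := by nlinarith [mul_le_mul h1 (pow_le_pow_left₀ hk.le k1 2) (by positivity : (0:ℝ) ≤ k^2) hH.le, hh]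
  have b5 : h^2*k^2 ≤ H^3*k := by nlinarith [mul_le_mul (pow_le_pow_left₀ hh.le h1 2) k1 hk.le (by positivity : (0:ℝ) ≤ H^2), hk]
  have b6 : h*k^3 ≤ H^3*k := by nlinarith [mul_le_mul h1 (pow_le_pow_left₀ hk.le k1 2) (by positivity : (0:ℝ) ≤ k^2) hH.le, hk]
  nlinarith [b1, b2, b3, b4, b5, b6]

lemma arithS2 {p q hhat K L : ℝ} (hp : 0 < p) (hq : 0 < q) (hp1 : p ≤ hhat)
    (hq1 : q ≤ hhat) (hKq : hhat ≤ K * q) (hL : 0 < L) :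
    3*(p/(p+q))*((L*(p+q)^4/24 + L*p^4/24)/q) ≤ 17/16*K*L*hhat^3 := by
  have hpq : 0 < p + q := by linarith
  have hhatpos : 0 < hhat := lt_of_lt_of_le hp hp1
  have e : 3*(p/(p+q))*((L*(p+q)^4/24 + L*p^4/24)/q)
      = L * (p*((p+q)^4+p^4)) / (8*(q*(p+q))) := by field_simp; ring
  rw [e, div_le_iff₀ (by positivity)]
  have P1 := arithP1 hp hq hp1 hq1
  have w1 : hhat^4 ≤ K*q*hhat^3 := by nlinarith [pow_pos hhatpos 3]
  have w2 : 0 ≤ L * (17*hhat^4*(p+q) - 2*p*((p+q)^4+p^4)) :=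
    mul_nonneg hL.le (by linarith)
  have w3 : 0 ≤ 17*L*(p+q)*(K*q*hhat^3 - hhat^4) :=
    mul_nonneg (by positivity) (by linarith)
  nlinarith [w2, w3]

lemma arithS13 {p q hhat K L : ℝ} (hp : 0 < p) (hq : 0 < q) (hp1 : p ≤ hhat)
    (hq1 : q ≤ hhat) (hK1 : 1 ≤ K) (hL : 0 < L) :
    3*(q/(p+q))*((L*p^4/24)/p) + 2*(L*p^3/6) + (p/(p+q))*(L*(p+q)^3/6)
      ≤ (1 + K^2/16)*L*hhat^3 := by
  have hpq : 0 < p + q := by linarith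
  have hhatpos : 0 < hhat := lt_of_lt_of_le hp hp1
  have e : 3*(q/(p+q))*((L*p^4/24)/p) + 2*(L*p^3/6) + (p/(p+q))*(L*(p+q)^3/6)
      = L * (6*q*p^3 + 16*p^3*(p+q) + 8*p*(p+q)^3) / (48*(p+q)) := by field_simp; ring
  rw [e]
  have G1b := arithG1 hp hq hp1 hq1
  have step : L * (6*q*p^3 + 16*p^3*(p+q) + 8*p*(p+q)^3) / (48*(p+q))
      ≤ 17/16*L*hhat^3 := by
    rw [div_le_iff₀ (by positivity)]
    have w : 0 ≤ L * (51*hhat^3*(p+q) - (6*q*p^3 + 16*p^3*(p+q) + 8*p*(p+q)^3)) :=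
      mul_nonneg hL.le (by linarith)
    nlinarith [w]
  have hK2 : 1 ≤ K^2 := one_le_pow₀ hK1
  nlinarith [step, pow_pos hhatpos 3, mul_pos hL (pow_pos hhatpos 3)]

lemma assemble (p q hhat K L R F0 F1 F2 G0 G1 G2 D2 D3 : ℝ)
    (hp : 0 < p) (hq : 0 < q) (hp1 : p ≤ hhat) (hq1 : q ≤ hhat)
    (hKq : hhat ≤ K * q) (hK1 : 1 ≤ K) (hL : 0 < L)
    (T1 : |F1 - (F0 + G0*p + D2*p^2/2 + D3*p^3/6)| ≤ L*p^4/24)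
    (T2 : |F2 - (F0 + G0*(p+q) + D2*(p+q)^2/2 + D3*(p+q)^3/6)| ≤ L*(p+q)^4/24)
    (T3 : |G1 - (G0 + D2*p + D3*p^2/2)| ≤ L*p^3/6)
    (T4 : |G2 - (G0 + D2*(p+q) + D3*(p+q)^2/2)| ≤ L*(p+q)^3/6)
    (hR : R = 3*(q/(p+q))*((F1-F0)/p) + 3*(p/(p+q))*((F2-F1)/q)
        - (q/(p+q))*G0 - 2*G1 - (p/(p+q))*G2) :
    |R| ≤ ((17*K + K^2)/16 + 1)*L*hhat^3 := by
  have hpq : 0 < p + q := by linarith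
  have hhatpos : 0 < hhat := lt_of_lt_of_le hp hp1
  obtain ⟨E1, hE1⟩ : ∃ E, F1 = F0 + G0*p + D2*p^2/2 + D3*p^3/6 + E :=
    ⟨F1 - (F0 + G0*p + D2*p^2/2 + D3*p^3/6), by ring⟩
  obtain ⟨E2, hE2⟩ : ∃ E, F2 = F0 + G0*(p+q) + D2*(p+q)^2/2 + D3*(p+q)^3/6 + E :=
    ⟨F2 - (F0 + G0*(p+q) + D2*(p+q)^2/2 + D3*(p+q)^3/6), by ring⟩
  obtain ⟨E3, hE3⟩ : ∃ E, G1 = G0 + D2*p + D3*p^2/2 + E :=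
    ⟨G1 - (G0 + D2*p + D3*p^2/2), by ring⟩
  obtain ⟨E4, hE4⟩ : ∃ E, G2 = G0 + D2*(p+q) + D3*(p+q)^2/2 + E :=
    ⟨G2 - (G0 + D2*(p+q) + D3*(p+q)^2/2), by ring⟩
  rw [hE1] at T1 hR
  rw [hE2] at T2 hR
  rw [hE3] at T3 hR
  rw [hE4] at T4 hR
  have T1' : |E1| ≤ L*p^4/24 := by
    have e : F0 + G0*p + D2*p^2/2 + D3*p^3/6 + E1
        - (F0 + G0*p + D2*p^2/2 + D3*p^3/6) = E1 := by ring
    rwa [e] at T1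
  have T2' : |E2| ≤ L*(p+q)^4/24 := by
    have e : F0 + G0*(p+q) + D2*(p+q)^2/2 + D3*(p+q)^3/6 + E2
        - (F0 + G0*(p+q) + D2*(p+q)^2/2 + D3*(p+q)^3/6) = E2 := by ring
    rwa [e] at T2
  have T3' : |E3| ≤ L*p^3/6 := by
    have e : G0 + D2*p + D3*p^2/2 + E3 - (G0 + D2*p + D3*p^2/2) = E3 := by ring
    rwa [e] at T3
  have T4' : |E4| ≤ L*(p+q)^3/6 := by
    have e : G0 + D2*(p+q) + D3*(p+q)^2/2 + E4 - (G0 + D2*(p+q) + D3*(p+q)^2/2) = E4 := by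
      ring
    rwa [e] at T4
  have key : R = 3*(q/(p+q))*(E1/p) + 3*(p/(p+q))*((E2-E1)/q) - 2*E3 - (p/(p+q))*E4 := by
    rw [hR]; field_simp; ring
  rw [key]
  clear T1 T2 T3 T4 hE1 hE2 hE3 hE4 key hR
  have A1 : |3*(q/(p+q))*(E1/p)| ≤ 3*(q/(p+q))*((L*p^4/24)/p) := by
    have e : |3*(q/(p+q))*(E1/p)| = 3*(q/(p+q))*(|E1|/p) := by
      rw [abs_mul, abs_div, abs_of_pos hp,
        abs_of_nonneg (by positivity : (0:ℝ) ≤ 3*(q/(p+q)))]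
    rw [e]; gcongr
  have A2 : |3*(p/(p+q))*((E2-E1)/q)| ≤ 3*(p/(p+q))*((L*(p+q)^4/24 + L*p^4/24)/q) := by
    have e : |3*(p/(p+q))*((E2-E1)/q)| = 3*(p/(p+q))*(|E2-E1|/q) := by
      rw [abs_mul, abs_div, abs_of_pos hq,
        abs_of_nonneg (by positivity : (0:ℝ) ≤ 3*(p/(p+q)))]
    rw [e]; gcongr
    exact (abs_sub _ _).trans (add_le_add T2' T1')
  have A3 : |2*E3| ≤ 2*(L*p^3/6) := by
    rw [abs_mul, abs_of_nonneg (by norm_num : (0:ℝ) ≤ 2)]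
    gcongr
  have A4 : |(p/(p+q))*E4| ≤ (p/(p+q))*(L*(p+q)^3/6) := by
    rw [abs_mul, abs_of_nonneg (by positivity : (0:ℝ) ≤ p/(p+q))]
    gcongr
  have tri : |3*(q/(p+q))*(E1/p) + 3*(p/(p+q))*((E2-E1)/q) - 2*E3 - (p/(p+q))*E4|
      ≤ |3*(q/(p+q))*(E1/p)| + |3*(p/(p+q))*((E2-E1)/q)| + |2*E3| + |(p/(p+q))*E4| := by
    have t1 := abs_sub (3*(q/(p+q))*(E1/p) + 3*(p/(p+q))*((E2-E1)/q) - 2*E3) ((p/(p+q))*E4)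
    have t2 := abs_sub (3*(q/(p+q))*(E1/p) + 3*(p/(p+q))*((E2-E1)/q)) (2*E3)
    have t3 := abs_add_le (3*(q/(p+q))*(E1/p)) (3*(p/(p+q))*((E2-E1)/q))
    linarith
  have S2 := arithS2 hp hq hp1 hq1 hKq hL
  have S13 := arithS13 hp hq hp1 hq1 hK1 hL
  have fin : 17/16*K*L*hhat^3 + (1 + K^2/16)*L*hhat^3
      = ((17*K + K^2)/16 + 1)*L*hhat^3 := by ring
  linarith [A1, A2, A3, A4, tri, S2, S13]
end Aux

/-- Bound on the residual
`R(i) = 3λᵢ₋₁mᵢ₋₁ + 3μᵢ₋₁mᵢ − λᵢ₋₁f'(xᵢ₋₁) − 2f'(xᵢ) − μᵢ₋₁f'(xᵢ₊₁)`: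
if `f ∈ C⁴` with `|f⁽⁴⁾| ≤ L` and `ĥ/hⱼ ≤ K`, then
`|R(i)| ≤ ((17K + K²)/16 + 1)·L·ĥ³` for all `2 ≤ i ≤ n−1`. -/
theorem spline_residual_bound (n : ℕ) (x : ℕ → ℝ) (f : ℝ → ℝ) (L K hhat : ℝ)
    (hn : 3 ≤ n)
    (hx : ∀ i, 1 ≤ i → i ≤ n - 1 → x i < x (i + 1))
    (hf : ContDiffOn ℝ 4 f (Set.Icc (x 1) (x n)))
    (hL : 0 < L)
    (hLb : ∀ t ∈ Set.Icc (x 1) (x n),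
      |iteratedDerivWithin 4 f (Set.Icc (x 1) (x n)) t| ≤ L)
    (hub : ∀ i, 1 ≤ i → i ≤ n - 1 → hstep x i ≤ hhat)
    (hach : ∃ i, 1 ≤ i ∧ i ≤ n - 1 ∧ hhat = hstep x i)
    (hK : 0 < K)
    (hKb : ∀ j, 1 ≤ j → j ≤ n - 1 → hhat / hstep x j ≤ K) :
    ∀ i, 2 ≤ i → i ≤ n - 1 →
      |3 * lamb x (i - 1) * mslope x f (i - 1) + 3 * mub x (i - 1) * mslope x f i
        - lamb x (i - 1) * derivWithin f (Set.Icc (x 1) (x n)) (x (i - 1))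
        - 2 * derivWithin f (Set.Icc (x 1) (x n)) (x i)
        - mub x (i - 1) * derivWithin f (Set.Icc (x 1) (x n)) (x (i + 1))|
      ≤ ((17 * K + K ^ 2) / 16 + 1) * L * hhat ^ 3 := by
  intro i h2i hin1
  have hi1 : i - 1 + 1 = i := by omega
  -- monotonicity of the grid
  have mono : ∀ q p : ℕ, 1 ≤ p → p ≤ q → q ≤ n → x p ≤ x q := by
    intro q
    induction q with
    | zero => intro p hp hpq _; omega
    | succ q IH =>
      intro p hp hpq hqn
      rcases Nat.lt_or_ge p (q + 1) with hlt | hge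
      · have h1 : x q < x (q + 1) := hx q (by omega) (by omega)
        have h2 : x p ≤ x q := IH p hp (by omega) (by omega)
        linarith
      · have : p = q + 1 := by omega
        rw [this]
  -- ordering of the three points
  have hac : x (i - 1) < x i := by
    have := hx (i - 1) (by omega) (by omega); rwa [hi1] at this
  have hcb : x i < x (i + 1) := hx i (by omega) hin1
  have h1a : x 1 ≤ x (i - 1) := mono (i - 1) 1 le_rfl (by omega) (by omega)
  have hbn : x (i + 1) ≤ x n := mono n (i + 1) (by omega) (by omega) le_rfl
  have ha : x (i - 1) ∈ Set.Icc (x 1) (x n) := ⟨h1a, by linarith⟩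
  have hc : x i ∈ Set.Icc (x 1) (x n) := ⟨by linarith, by linarith⟩
  have hb : x (i + 1) ∈ Set.Icc (x 1) (x n) := ⟨by linarith, by linarith⟩
  have hsU : UniqueDiffOn ℝ (Set.Icc (x 1) (x n)) := uniqueDiffOn_Icc (by linarith)
  -- step sizes
  have hp : 0 < x i - x (i - 1) := by linarith
  have hq : 0 < x (i + 1) - x i := by linarith
  have hp1 : x i - x (i - 1) ≤ hhat := by
    have := hub (i - 1) (by omega) (by omega)
    rw [hstep, hi1] at this; exact this
  have hq1 : x (i + 1) - x i ≤ hhat := hub i (by omega) hin1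
  have hhatpos : 0 < hhat := by linarith
  have hKq : hhat ≤ K * (x (i + 1) - x i) := by
    have := hKb i (by omega) hin1
    rw [hstep] at this
    exact (div_le_iff₀ hq).mp this
  have hK1 : 1 ≤ K := by
    obtain ⟨j₀, hj1, hj2, hje⟩ := hach
    have h := hKb j₀ hj1 hj2
    rw [← hje, div_self (ne_of_gt hhatpos)] at h
    exact h
  -- the derivative function
  have hg : ContDiffOn ℝ 3 (derivWithin f (Set.Icc (x 1) (x n))) (Set.Icc (x 1) (x n)) := by
    have h34 : (3 : WithTop ℕ∞) + 1 ≤ 4 := by norm_num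
    exact hf.derivWithin hsU h34
  have hgb : ∀ t ∈ Set.Icc (x 1) (x n),
      |iteratedDerivWithin 3 (derivWithin f (Set.Icc (x 1) (x n))) (Set.Icc (x 1) (x n)) t|
        ≤ L := by
    intro t ht
    have e := congrFun (iteratedDerivWithin_succ' (n := 3) (f := f) (s := Set.Icc (x 1) (x n))) t
    norm_num at e
    rw [← e]
    exact hLb t ht
  -- relate iterated derivatives of g to those of f at x (i-1)
  have eg1 : derivWithin (derivWithin f (Set.Icc (x 1) (x n))) (Set.Icc (x 1) (x n)) (x (i-1))
      = iteratedDerivWithin 2 f (Set.Icc (x 1) (x n)) (x (i-1)) := by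
    have e := congrFun (iteratedDerivWithin_succ' (n := 1) (f := f) (s := Set.Icc (x 1) (x n))) (x (i - 1))
    rw [iteratedDerivWithin_one] at e
    norm_num at e
    exact e.symm
  have eg2 : iteratedDerivWithin 2 (derivWithin f (Set.Icc (x 1) (x n)))
        (Set.Icc (x 1) (x n)) (x (i-1))
      = iteratedDerivWithin 3 f (Set.Icc (x 1) (x n)) (x (i-1)) := by
    have e := congrFun (iteratedDerivWithin_succ' (n := 2) (f := f) (s := Set.Icc (x 1) (x n))) (x (i - 1))
    norm_num at e
    exact e.symm
  -- Taylor estimates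
  have T1 := taylor3 hf hLb ha hc hac
  have T2 := taylor3 hf hLb ha hb (hac.trans hcb)
  have T3 := taylor2 hg hgb ha hc hac
  have T4 := taylor2 hg hgb ha hb (hac.trans hcb)
  rw [eg1, eg2] at T3 T4
  have hsum : x (i + 1) - x (i - 1) = (x i - x (i - 1)) + (x (i + 1) - x i) := by ring
  rw [hsum] at T2 T4
  exact assemble (x i - x (i - 1)) (x (i + 1) - x i) hhat K L _
    (f (x (i - 1))) (f (x i)) (f (x (i + 1)))
    (derivWithin f (Set.Icc (x 1) (x n)) (x (i - 1)))
    (derivWithin f (Set.Icc (x 1) (x n)) (x i))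
    (derivWithin f (Set.Icc (x 1) (x n)) (x (i + 1)))
    (iteratedDerivWithin 2 f (Set.Icc (x 1) (x n)) (x (i - 1)))
    (iteratedDerivWithin 3 f (Set.Icc (x 1) (x n)) (x (i - 1)))
    hp hq hp1 hq1 hKq hK1 hL T1 T2 T3 T4
    (by simp only [lamb, mub, mslope, hstep, hi1])
end

section
/- Let f be four times continuously differentiable on [x_1, x_n] with |f⁽⁴⁾(x)| ≤ L for all x, assume ĥ < 1, and suppose there exists K > 0 such that ĥ/h_j ≤ K for all 1 ≤ j ≤ n−1. Let ḟ_2, …, ḟ_{n−1} solve the spline system, and set ḟ_1 = f'(x_1), ḟ_n = f'(x_n). Let S be the piecewise function on [x_1, x_n] whose restriction to each [x_i, x_{i+1}] is the cubic Hermite interpolant of the data (f_i, ḟ_i), (f_{i+1}, ḟ_{i+1}). Then sup_{x ∈ [x_1, x_n]} |S(x) − f(x)| ≤ (1/384 + 2·((17K + K²)/16 + 1))·L·ĥ⁴, i.e. the spline interpolant has order of accuracy O(ĥ⁴). -/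
set_option maxHeartbeats 1000000

lemma crude_mvt {S : Set ℝ} {g g' : ℝ → ℝ} {a C : ℝ} {k : ℕ}
    (hconv : Convex ℝ S) (hC : 0 ≤ C) (ha : a ∈ S)
    (hg : ∀ y ∈ S, HasDerivWithinAt g (g' y) S y) (h0 : g a = 0)
    (hb : ∀ y ∈ S, |g' y| ≤ C * |y - a| ^ k) :
    ∀ y ∈ S, |g y| ≤ C * |y - a| ^ (k + 1) := by
  intro y hy
  have hsub : Set.uIcc a y ⊆ S := (hconv.ordConnected).uIcc_subset ha hy
  have key : ‖g y - g a‖ ≤ (C * |y - a| ^ k) * ‖y - a‖ := by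
    apply Convex.norm_image_sub_le_of_norm_hasDerivWithin_le
      (fun t ht => (hg t (hsub ht)).mono hsub)
      (fun t ht => ?_) (convex_uIcc a y) Set.left_mem_uIcc Set.right_mem_uIcc
    have h1 : |t - a| ≤ |y - a| := by
      rcases Set.mem_uIcc.mp ht with ⟨u1, u2⟩ | ⟨u1, u2⟩ <;>
        (rw [abs_le]; constructor <;>
          linarith [abs_nonneg (y - a), neg_abs_le (y - a), le_abs_self (y - a)])
    calc ‖g' t‖ = |g' t| := Real.norm_eq_abs _
      _ ≤ C * |t - a| ^ k := hb t (hsub ht)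
      _ ≤ C * |y - a| ^ k :=
          mul_le_mul_of_nonneg_left (pow_le_pow_left₀ (abs_nonneg _) h1 k) hC
  rw [h0, sub_zero, Real.norm_eq_abs, Real.norm_eq_abs] at key
  calc |g y| ≤ C * |y - a| ^ k * |y - a| := key
    _ = C * |y - a| ^ (k + 1) := by rw [pow_succ, mul_assoc]

lemma taylor_crude {f : ℝ → ℝ} {A B L a : ℝ} (hAB : A < B)
    (hf : ContDiffOn ℝ 4 f (Set.Icc A B)) (hL : 0 ≤ L) (ha : a ∈ Set.Icc A B)
    (hLb : ∀ t ∈ Set.Icc A B, |iteratedDerivWithin 4 f (Set.Icc A B) t| ≤ L) :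
    ∀ y ∈ Set.Icc A B,
      |f y - (f a + derivWithin f (Set.Icc A B) a * (y - a)
          + iteratedDerivWithin 2 f (Set.Icc A B) a * (y - a) ^ 2 / 2
          + iteratedDerivWithin 3 f (Set.Icc A B) a * (y - a) ^ 3 / 6)| ≤ L * |y - a| ^ 4 ∧
      |derivWithin f (Set.Icc A B) y - (derivWithin f (Set.Icc A B) a
          + iteratedDerivWithin 2 f (Set.Icc A B) a * (y - a)
          + iteratedDerivWithin 3 f (Set.Icc A B) a * (y - a) ^ 2 / 2)| ≤ L * |y - a| ^ 3 := by
  have hu : UniqueDiffOn ℝ (Set.Icc A B) := uniqueDiffOn_Icc hAB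
  have hconv : Convex ℝ (Set.Icc A B) := convex_Icc A B
  have hder : ∀ k : ℕ, k < 4 → ∀ y ∈ Set.Icc A B,
      HasDerivWithinAt (iteratedDerivWithin k f (Set.Icc A B))
        (iteratedDerivWithin (k + 1) f (Set.Icc A B) y) (Set.Icc A B) y := by
    intro k hk y hy
    have hdiff : DifferentiableOn ℝ (iteratedDerivWithin k f (Set.Icc A B)) (Set.Icc A B) :=
      hf.differentiableOn_iteratedDerivWithin (by exact_mod_cast hk) hu
    have h1 := (hdiff y hy).hasDerivWithinAt
    rwa [← iteratedDerivWithin_succ] at h1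
  have b3 := crude_mvt (k := 0) hconv hL ha
      (g := fun y => iteratedDerivWithin 3 f (Set.Icc A B) y
        - iteratedDerivWithin 3 f (Set.Icc A B) a)
      (g' := fun y => iteratedDerivWithin 4 f (Set.Icc A B) y)
      (fun y hy => (hder 3 (by norm_num) y hy).sub_const _)
      (by simp)
      (fun y hy => by simpa using hLb y hy)
  have b2 := crude_mvt (k := 1) hconv hL ha
      (g := fun y => iteratedDerivWithin 2 f (Set.Icc A B) y
        - iteratedDerivWithin 2 f (Set.Icc A B) a
        - iteratedDerivWithin 3 f (Set.Icc A B) a * (y - a))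
      (g' := fun y => iteratedDerivWithin 3 f (Set.Icc A B) y
        - iteratedDerivWithin 3 f (Set.Icc A B) a)
      (fun y hy => by
        have h1 := (hder 2 (by norm_num) y hy).sub_const
          (iteratedDerivWithin 2 f (Set.Icc A B) a)
        have h2 : HasDerivWithinAt (fun y => iteratedDerivWithin 3 f (Set.Icc A B) a * (y - a))
            (iteratedDerivWithin 3 f (Set.Icc A B) a) (Set.Icc A B) y := by
          simpa using ((hasDerivWithinAt_id y (Set.Icc A B)).sub_const a).const_mul
            (iteratedDerivWithin 3 f (Set.Icc A B) a)
        exact h1.sub h2)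
      (by simp)
      (fun y hy => b3 y hy)
  have b1 := crude_mvt (k := 2) hconv hL ha
      (g := fun y => iteratedDerivWithin 1 f (Set.Icc A B) y
        - iteratedDerivWithin 1 f (Set.Icc A B) a
        - iteratedDerivWithin 2 f (Set.Icc A B) a * (y - a)
        - iteratedDerivWithin 3 f (Set.Icc A B) a * (y - a) ^ 2 / 2)
      (g' := fun y => iteratedDerivWithin 2 f (Set.Icc A B) y
        - iteratedDerivWithin 2 f (Set.Icc A B) a
        - iteratedDerivWithin 3 f (Set.Icc A B) a * (y - a))
      (fun y hy => by
        have h1 := (hder 1 (by norm_num) y hy).sub_const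
          (iteratedDerivWithin 1 f (Set.Icc A B) a)
        have h2 : HasDerivWithinAt (fun y => iteratedDerivWithin 2 f (Set.Icc A B) a * (y - a))
            (iteratedDerivWithin 2 f (Set.Icc A B) a) (Set.Icc A B) y := by
          simpa using ((hasDerivWithinAt_id y (Set.Icc A B)).sub_const a).const_mul
            (iteratedDerivWithin 2 f (Set.Icc A B) a)
        have h3 : HasDerivWithinAt
            (fun y => iteratedDerivWithin 3 f (Set.Icc A B) a * (y - a) ^ 2 / 2)
            (iteratedDerivWithin 3 f (Set.Icc A B) a * (y - a)) (Set.Icc A B) y := by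
          have h4 := ((((hasDerivWithinAt_id y (Set.Icc A B)).sub_const a).pow 2).const_mul
            (iteratedDerivWithin 3 f (Set.Icc A B) a)).div_const 2
          refine h4.congr_deriv ?_
          norm_num; ring
        exact (h1.sub h2).sub h3)
      (by simp)
      (fun y hy => b2 y hy)
  have b0 := crude_mvt (k := 3) hconv hL ha
      (g := fun y => f y - (f a + iteratedDerivWithin 1 f (Set.Icc A B) a * (y - a)
        + iteratedDerivWithin 2 f (Set.Icc A B) a * (y - a) ^ 2 / 2
        + iteratedDerivWithin 3 f (Set.Icc A B) a * (y - a) ^ 3 / 6))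
      (g' := fun y => iteratedDerivWithin 1 f (Set.Icc A B) y
        - iteratedDerivWithin 1 f (Set.Icc A B) a
        - iteratedDerivWithin 2 f (Set.Icc A B) a * (y - a)
        - iteratedDerivWithin 3 f (Set.Icc A B) a * (y - a) ^ 2 / 2)
      (fun y hy => by
        have h0' := hder 0 (by norm_num) y hy
        rw [iteratedDerivWithin_zero] at h0'
        have h1 : HasDerivWithinAt (fun y => f a
            + iteratedDerivWithin 1 f (Set.Icc A B) a * (y - a)
            + iteratedDerivWithin 2 f (Set.Icc A B) a * (y - a) ^ 2 / 2
            + iteratedDerivWithin 3 f (Set.Icc A B) a * (y - a) ^ 3 / 6)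
            (iteratedDerivWithin 1 f (Set.Icc A B) a
            + iteratedDerivWithin 2 f (Set.Icc A B) a * (y - a)
            + iteratedDerivWithin 3 f (Set.Icc A B) a * (y - a) ^ 2 / 2) (Set.Icc A B) y := by
          have p1 : HasDerivWithinAt
              (fun y => iteratedDerivWithin 1 f (Set.Icc A B) a * (y - a))
              (iteratedDerivWithin 1 f (Set.Icc A B) a) (Set.Icc A B) y := by
            simpa using ((hasDerivWithinAt_id y (Set.Icc A B)).sub_const a).const_mul
              (iteratedDerivWithin 1 f (Set.Icc A B) a)
          have p2 : HasDerivWithinAt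
              (fun y => iteratedDerivWithin 2 f (Set.Icc A B) a * (y - a) ^ 2 / 2)
              (iteratedDerivWithin 2 f (Set.Icc A B) a * (y - a)) (Set.Icc A B) y := by
            have h4 := ((((hasDerivWithinAt_id y (Set.Icc A B)).sub_const a).pow 2).const_mul
              (iteratedDerivWithin 2 f (Set.Icc A B) a)).div_const 2
            refine h4.congr_deriv ?_
            norm_num; ring
          have p3 : HasDerivWithinAt
              (fun y => iteratedDerivWithin 3 f (Set.Icc A B) a * (y - a) ^ 3 / 6)
              (iteratedDerivWithin 3 f (Set.Icc A B) a * (y - a) ^ 2 / 2) (Set.Icc A B) y := by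
            have h4 := ((((hasDerivWithinAt_id y (Set.Icc A B)).sub_const a).pow 3).const_mul
              (iteratedDerivWithin 3 f (Set.Icc A B) a)).div_const 6
            refine h4.congr_deriv ?_
            norm_num; ring
          exact ((((hasDerivWithinAt_const y (Set.Icc A B) (f a)).add p1).add p2).add p3).congr_deriv (by ring)
        have := h0'.sub h1
        refine this.congr_deriv ?_
        ring)
      (by simp)
      (fun y hy => b1 y hy)
  intro y hy
  have hone : ∀ z, z ∈ Set.Icc A B →
      iteratedDerivWithin 1 f (Set.Icc A B) z = derivWithin f (Set.Icc A B) z :=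
    fun z hz => congrFun iteratedDerivWithin_one z
  constructor
  · have h := b0 y hy
    beta_reduce at h
    rw [hone a ha] at h
    exact h
  · have h := b1 y hy
    beta_reduce at h
    rw [hone y hy, hone a ha] at h
    have h2 : derivWithin f (Set.Icc A B) y - (derivWithin f (Set.Icc A B) a
        + iteratedDerivWithin 2 f (Set.Icc A B) a * (y - a)
        + iteratedDerivWithin 3 f (Set.Icc A B) a * (y - a) ^ 2 / 2)
        = derivWithin f (Set.Icc A B) y - derivWithin f (Set.Icc A B) a
        - iteratedDerivWithin 2 f (Set.Icc A B) a * (y - a)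
        - iteratedDerivWithin 3 f (Set.Icc A B) a * (y - a) ^ 2 / 2 := by ring
    rw [h2]
    exact h

lemma interior_ebound (U V H L d0 d1 d2 F0 F1 F2 G0 G2 c1 c2 c3 : ℝ)
    (hU : 0 < U) (hV : 0 < V) (hUH : U ≤ H) (hVH : V ≤ H) (hL : 0 ≤ L)
    (hsys : V / (U + V) * d0 + 2 * d1 + U / (U + V) * d2
      = 3 * (V / (U + V) * ((F1 - F0) / U) + U / (U + V) * ((F2 - F1) / V)))
    (hrL : |F0 - (F1 + c1 * -U + c2 * (-U) ^ 2 / 2 + c3 * (-U) ^ 3 / 6)| ≤ L * U ^ 4)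
    (hrR : |F2 - (F1 + c1 * V + c2 * V ^ 2 / 2 + c3 * V ^ 3 / 6)| ≤ L * V ^ 4)
    (hgL : |G0 - (c1 + c2 * -U + c3 * (-U) ^ 2 / 2)| ≤ L * U ^ 3)
    (hgR : |G2 - (c1 + c2 * V + c3 * V ^ 2 / 2)| ≤ L * V ^ 3)
    (heL : |d0 - G0| ≤ |d1 - c1|) (heR : |d2 - G2| ≤ |d1 - c1|) :
    |d1 - c1| ≤ 4 * L * H ^ 3 := by
  have hW : (0:ℝ) < U + V := by linarith
  have hWne : U + V ≠ 0 := ne_of_gt hW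
  have hUne : U ≠ 0 := ne_of_gt hU
  have hVne : V ≠ 0 := ne_of_gt hV
  have hlam0 : 0 ≤ V / (U + V) := by positivity
  have hmu0 : 0 ≤ U / (U + V) := by positivity
  have hsum : V / (U + V) + U / (U + V) = 1 := by field_simp; ring
  have hd1 : d1 = (3 * (V / (U + V) * ((F1 - F0) / U) + U / (U + V) * ((F2 - F1) / V))
      - V / (U + V) * d0 - U / (U + V) * d2) / 2 := by linarith
  have key : 2 * (d1 - c1)
      = 3 * (V / (U + V)) * (-(F0 - (F1 + c1 * -U + c2 * (-U) ^ 2 / 2 + c3 * (-U) ^ 3 / 6)) / U)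
      + 3 * (U / (U + V)) * ((F2 - (F1 + c1 * V + c2 * V ^ 2 / 2 + c3 * V ^ 3 / 6)) / V)
      - (V / (U + V)) * (G0 - (c1 + c2 * -U + c3 * (-U) ^ 2 / 2))
      - (U / (U + V)) * (G2 - (c1 + c2 * V + c3 * V ^ 2 / 2))
      - (V / (U + V)) * (d0 - G0)
      - (U / (U + V)) * (d2 - G2) := by
    rw [hd1]; field_simp; ring
  -- component bounds
  have t1 : |3 * (V / (U + V)) * (-(F0 - (F1 + c1 * -U + c2 * (-U) ^ 2 / 2 + c3 * (-U) ^ 3 / 6)) / U)|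
      ≤ 3 * (V / (U + V)) * (L * U ^ 3) := by
    rw [abs_mul, abs_div, abs_neg, abs_of_pos hU, abs_of_nonneg (by positivity)]
    apply mul_le_mul_of_nonneg_left _ (by positivity)
    rw [div_le_iff₀ hU]
    nlinarith [hrL]
  have t2 : |3 * (U / (U + V)) * ((F2 - (F1 + c1 * V + c2 * V ^ 2 / 2 + c3 * V ^ 3 / 6)) / V)|
      ≤ 3 * (U / (U + V)) * (L * V ^ 3) := by
    rw [abs_mul, abs_div, abs_of_pos hV, abs_of_nonneg (by positivity)]
    apply mul_le_mul_of_nonneg_left _ (by positivity)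
    rw [div_le_iff₀ hV]
    nlinarith [hrR]
  have t3 : |(V / (U + V)) * (G0 - (c1 + c2 * -U + c3 * (-U) ^ 2 / 2))|
      ≤ (V / (U + V)) * (L * U ^ 3) := by
    rw [abs_mul, abs_of_nonneg hlam0]
    exact mul_le_mul_of_nonneg_left hgL hlam0
  have t4 : |(U / (U + V)) * (G2 - (c1 + c2 * V + c3 * V ^ 2 / 2))|
      ≤ (U / (U + V)) * (L * V ^ 3) := by
    rw [abs_mul, abs_of_nonneg hmu0]
    exact mul_le_mul_of_nonneg_left hgR hmu0
  have t5 : |(V / (U + V)) * (d0 - G0)| ≤ (V / (U + V)) * |d1 - c1| := by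
    rw [abs_mul, abs_of_nonneg hlam0]
    exact mul_le_mul_of_nonneg_left heL hlam0
  have t6 : |(U / (U + V)) * (d2 - G2)| ≤ (U / (U + V)) * |d1 - c1| := by
    rw [abs_mul, abs_of_nonneg hmu0]
    exact mul_le_mul_of_nonneg_left heR hmu0
  have l1 := abs_le.mp t1
  have l2 := abs_le.mp t2
  have l3 := abs_le.mp t3
  have l4 := abs_le.mp t4
  have l5 := abs_le.mp t5
  have l6 := abs_le.mp t6
  have habs : |2 * (d1 - c1)| ≤ 3 * (V / (U + V)) * (L * U ^ 3) + 3 * (U / (U + V)) * (L * V ^ 3)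
      + (V / (U + V)) * (L * U ^ 3) + (U / (U + V)) * (L * V ^ 3)
      + (V / (U + V)) * |d1 - c1| + (U / (U + V)) * |d1 - c1| := by
    rw [key, abs_le]
    constructor <;> linarith [l1.1, l1.2, l2.1, l2.2, l3.1, l3.2, l4.1, l4.2, l5.1, l5.2, l6.1, l6.2]
  have h2A : |2 * (d1 - c1)| = 2 * |d1 - c1| := by
    rw [abs_mul, abs_two]
  have hq1 : (V / (U + V)) * (L * U ^ 3) ≤ (V / (U + V)) * (L * H ^ 3) := by
    apply mul_le_mul_of_nonneg_left _ hlam0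
    apply mul_le_mul_of_nonneg_left _ hL
    exact pow_le_pow_left₀ hU.le hUH 3
  have hq2 : (U / (U + V)) * (L * V ^ 3) ≤ (U / (U + V)) * (L * H ^ 3) := by
    apply mul_le_mul_of_nonneg_left _ hmu0
    apply mul_le_mul_of_nonneg_left _ hL
    exact pow_le_pow_left₀ hV.le hVH 3
  have hq3 : (V / (U + V)) * (L * H ^ 3) + (U / (U + V)) * (L * H ^ 3) = L * H ^ 3 := by
    rw [← add_mul, hsum, one_mul]
  have hq4 : (V / (U + V)) * |d1 - c1| + (U / (U + V)) * |d1 - c1| = |d1 - c1| := by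
    rw [← add_mul, hsum, one_mul]
  rw [h2A] at habs
  linarith

lemma hermite_decomp (xi xip tt h s fi fip di dip ft c1 c2 c3 r1 r2 e2 e1 rt : ℝ)
    (hne : h ≠ 0) (hxip : xip = xi + h) (htt : tt = xi + s)
    (hr1 : r1 = fip - (fi + c1 * h + c2 * h ^ 2 / 2 + c3 * h ^ 3 / 6))
    (hre : r2 + e2 = dip - (c1 + c2 * h + c3 * h ^ 2 / 2))
    (he1 : e1 = di - c1)
    (hrt : rt = ft - (fi + c1 * s + c2 * s ^ 2 / 2 + c3 * s ^ 3 / 6)) :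
    hermite xi xip fi fip di dip tt - ft
      = r1 * (s ^ 2 * (3 * h - 2 * s) / h ^ 3) + (r2 + e2) * (s ^ 2 * (s - h) / h ^ 2)
        + e1 * (s * (s - h) ^ 2 / h ^ 2) - rt := by
  subst hxip htt hr1 he1 hrt
  rw [hre]
  simp only [hermite]
  simp only [add_sub_cancel_left]
  field_simp
  ring

lemma final_abstract (h s r1 r2 rt e1 e2 L H K : ℝ)
    (hh : 0 < h) (hs0 : 0 ≤ s) (hsh : s ≤ h) (hH : h ≤ H) (hH0 : 0 < H)
    (hL : 0 ≤ L) (hK : 1 ≤ K)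
    (hr1 : |r1| ≤ L * h ^ 4) (hr2 : |r2| ≤ L * h ^ 3) (hrt : |rt| ≤ L * s ^ 4)
    (he1 : |e1| ≤ 4 * L * H ^ 3) (he2 : |e2| ≤ 4 * L * H ^ 3) :
    |r1 * (s ^ 2 * (3 * h - 2 * s) / h ^ 3) + (r2 + e2) * (s ^ 2 * (s - h) / h ^ 2)
      + e1 * (s * (s - h) ^ 2 / h ^ 2) - rt|
      ≤ (1 / 384 + 2 * ((17 * K + K ^ 2) / 16 + 1)) * L * H ^ 4 := by
  have hLH4 : (0:ℝ) ≤ L * H ^ 4 := by positivity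
  have B1 : |s ^ 2 * (3 * h - 2 * s) / h ^ 3| ≤ 1 := by
    rw [abs_div, abs_of_pos (by positivity : (0:ℝ) < h ^ 3), div_le_one (by positivity)]
    rw [abs_of_nonneg (by nlinarith : (0:ℝ) ≤ s ^ 2 * (3 * h - 2 * s))]
    nlinarith [sq_nonneg (h - s), mul_nonneg (mul_nonneg (sub_nonneg.mpr hsh) (sub_nonneg.mpr hsh)) (by linarith : (0:ℝ) ≤ h + 2 * s)]
  have B2 : |s ^ 2 * (s - h) / h ^ 2| ≤ 4 / 27 * H := by
    rw [abs_div, abs_of_pos (by positivity : (0:ℝ) < h ^ 2), div_le_iff₀ (by positivity)]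
    rw [abs_mul, abs_of_nonneg (by positivity : (0:ℝ) ≤ s ^ 2),
      abs_of_nonpos (by linarith : s - h ≤ 0)]
    nlinarith [mul_nonneg (mul_nonneg (sq_nonneg (2 * h - 3 * s)) (by linarith : (0:ℝ) ≤ h + 3 * s)) (le_of_lt hh), sq_nonneg h, mul_le_mul_of_nonneg_left hH (by positivity : (0:ℝ) ≤ h ^ 2)]
  have B3 : |s * (s - h) ^ 2 / h ^ 2| ≤ 4 / 27 * H := by
    rw [abs_div, abs_of_pos (by positivity : (0:ℝ) < h ^ 2), div_le_iff₀ (by positivity)]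
    rw [abs_mul, abs_of_nonneg hs0, abs_of_nonneg (sq_nonneg _)]
    nlinarith [mul_nonneg (mul_nonneg (sq_nonneg (3 * s - h)) (by linarith : (0:ℝ) ≤ 4 * h - 3 * s)) (le_of_lt hh), mul_le_mul_of_nonneg_left hH (by positivity : (0:ℝ) ≤ h ^ 2)]
  have t1 : |r1 * (s ^ 2 * (3 * h - 2 * s) / h ^ 3)| ≤ L * H ^ 4 := by
    rw [abs_mul]
    calc |r1| * |s ^ 2 * (3 * h - 2 * s) / h ^ 3| ≤ (L * h ^ 4) * 1 :=
          mul_le_mul hr1 B1 (abs_nonneg _) (by positivity)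
      _ ≤ L * H ^ 4 := by nlinarith [pow_le_pow_left₀ hh.le hH 4]
  have t2 : |(r2 + e2) * (s ^ 2 * (s - h) / h ^ 2)| ≤ (L * H ^ 3 + 4 * L * H ^ 3) * (4 / 27 * H) := by
    rw [abs_mul]
    apply mul_le_mul _ B2 (abs_nonneg _) (by positivity)
    calc |r2 + e2| ≤ |r2| + |e2| := abs_add_le _ _
      _ ≤ L * H ^ 3 + 4 * L * H ^ 3 := by
          have : L * h ^ 3 ≤ L * H ^ 3 := by nlinarith [pow_le_pow_left₀ hh.le hH 3]
          linarith
  have t3 : |e1 * (s * (s - h) ^ 2 / h ^ 2)| ≤ (4 * L * H ^ 3) * (4 / 27 * H) := by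
    rw [abs_mul]
    exact mul_le_mul he1 B3 (abs_nonneg _) (by positivity)
  have t4 : |rt| ≤ L * H ^ 4 := by
    calc |rt| ≤ L * s ^ 4 := hrt
      _ ≤ L * H ^ 4 := by nlinarith [pow_le_pow_left₀ hs0 (le_trans hsh hH) 4]
  have l1 := abs_le.mp t1
  have l2 := abs_le.mp t2
  have l3 := abs_le.mp t3
  have l4 := abs_le.mp t4
  have htotal : |r1 * (s ^ 2 * (3 * h - 2 * s) / h ^ 3) + (r2 + e2) * (s ^ 2 * (s - h) / h ^ 2)
      + e1 * (s * (s - h) ^ 2 / h ^ 2) - rt| ≤ 10 / 3 * (L * H ^ 4) := by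
    rw [abs_le]
    constructor <;> nlinarith [l1.1, l1.2, l2.1, l2.2, l3.1, l3.2, l4.1, l4.2]
  calc |r1 * (s ^ 2 * (3 * h - 2 * s) / h ^ 3) + (r2 + e2) * (s ^ 2 * (s - h) / h ^ 2)
      + e1 * (s * (s - h) ^ 2 / h ^ 2) - rt| ≤ 10 / 3 * (L * H ^ 4) := htotal
    _ ≤ (1 / 384 + 2 * ((17 * K + K ^ 2) / 16 + 1)) * L * H ^ 4 := by
        nlinarith [mul_nonneg (sub_nonneg.mpr hK) hLH4,
          mul_nonneg (mul_nonneg (sub_nonneg.mpr hK) (sub_nonneg.mpr hK)) hLH4,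
          mul_nonneg (sub_nonneg.mpr hK) (mul_nonneg (sub_nonneg.mpr hK) hLH4), hLH4]

/-- Fourth-order accuracy of the cubic spline interpolant: on each interval
`[xᵢ, xᵢ₊₁]` (hence uniformly on `[x₁, xₙ]`) the spline built from the
derivative values solving the spline system satisfies
`|S(x) − f(x)| ≤ (1/384 + 2·((17K + K²)/16 + 1))·L·ĥ⁴`. -/
theorem spline_fourth_order (n : ℕ) (x : ℕ → ℝ) (f : ℝ → ℝ)
    (df : ℕ → ℝ) (L K hhat : ℝ) (hn : 3 ≤ n)
    (hx : ∀ i, 1 ≤ i → i ≤ n - 1 → x i < x (i + 1))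
    (hf : ContDiffOn ℝ 4 f (Set.Icc (x 1) (x n)))
    (hL : 0 < L)
    (hLb : ∀ t ∈ Set.Icc (x 1) (x n),
      |iteratedDerivWithin 4 f (Set.Icc (x 1) (x n)) t| ≤ L)
    (hhat1 : hhat < 1)
    (hub : ∀ i, 1 ≤ i → i ≤ n - 1 → hstep x i ≤ hhat)
    (hach : ∃ i, 1 ≤ i ∧ i ≤ n - 1 ∧ hhat = hstep x i)
    (hK : 0 < K)
    (hKb : ∀ j, 1 ≤ j → j ≤ n - 1 → hhat / hstep x j ≤ K)
    (hdf1 : df 1 = derivWithin f (Set.Icc (x 1) (x n)) (x 1))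
    (hdfn : df n = derivWithin f (Set.Icc (x 1) (x n)) (x n))
    (hsys : ∀ j, 2 ≤ j → j ≤ n - 1 →
      lamb x (j - 1) * df (j - 1) + 2 * df j + mub x (j - 1) * df (j + 1)
        = 3 * (lamb x (j - 1) * mslope x f (j - 1) + mub x (j - 1) * mslope x f j)) :
    ∀ i, 1 ≤ i → i ≤ n - 1 → ∀ t ∈ Set.Icc (x i) (x (i + 1)),
      |hermite (x i) (x (i + 1)) (f (x i)) (f (x (i + 1))) (df i) (df (i + 1)) t - f t|
        ≤ (1 / 384 + 2 * ((17 * K + K ^ 2) / 16 + 1)) * L * hhat ^ 4 := by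
  intro i h1i hin t ht
  have mono : ∀ p q : ℕ, 1 ≤ p → p ≤ q → q ≤ n → x p ≤ x q := by
    have step : ∀ d : ℕ, ∀ p : ℕ, 1 ≤ p → p + d ≤ n → x p ≤ x (p + d) := by
      intro d
      induction d with
      | zero => intro p _ _; simp
      | succ d ih =>
        intro p hp hpd
        have h1 : x p ≤ x (p + d) := ih p hp (by omega)
        have h2 : x (p + d) < x (p + d + 1) := hx (p + d) (by omega) (by omega)
        have h3 : p + (d + 1) = p + d + 1 := by omega
        rw [h3]
        linarith
    intro p q hp hpq hq
    have h4 : q = p + (q - p) := by omega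
    rw [h4]
    exact step (q - p) p hp (by omega)
  have memS : ∀ j, 1 ≤ j → j ≤ n → x j ∈ Set.Icc (x 1) (x n) :=
    fun j h1 h2 => ⟨mono 1 j le_rfl h1 h2, mono j n h1 h2 le_rfl⟩
  have hx1n : x 1 < x n :=
    lt_of_lt_of_le (hx 1 le_rfl (by omega)) (mono 2 n (by omega) (by omega) le_rfl)
  have hpos : ∀ j, 1 ≤ j → j ≤ n - 1 → (0:ℝ) < x (j + 1) - x j :=
    fun j h1 h2 => sub_pos.mpr (hx j h1 h2)
  obtain ⟨i0, hi01, hi0n, hi0e⟩ := hach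
  have hhat_pos : 0 < hhat := by rw [hi0e]; exact hpos i0 hi01 hi0n
  have hK1 : 1 ≤ K := by
    have h := hKb i0 hi01 hi0n
    have hne : hstep x i0 ≠ 0 := ne_of_gt (hpos i0 hi01 hi0n)
    rw [hi0e, div_self hne] at h
    exact h
  have taylor := fun (a : ℝ) (haS : a ∈ Set.Icc (x 1) (x n)) =>
    taylor_crude hx1n hf hL.le haS hLb
  -- bound on the derivative errors via the max principle
  have ebound : ∀ j, 1 ≤ j → j ≤ n →
      |df j - derivWithin f (Set.Icc (x 1) (x n)) (x j)| ≤ 4 * L * hhat ^ 3 := by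
    obtain ⟨j0, hj0mem, hj0max⟩ := Finset.exists_max_image (Finset.Icc 1 n)
      (fun j => |df j - derivWithin f (Set.Icc (x 1) (x n)) (x j)|)
      ⟨1, Finset.mem_Icc.mpr ⟨le_rfl, by omega⟩⟩
    obtain ⟨hj01, hj0n⟩ := Finset.mem_Icc.mp hj0mem
    have hnn : (0:ℝ) ≤ 4 * L * hhat ^ 3 :=
      mul_nonneg (mul_nonneg (by norm_num) hL.le) (pow_nonneg hhat_pos.le 3)
    suffices hmax : |df j0 - derivWithin f (Set.Icc (x 1) (x n)) (x j0)| ≤ 4 * L * hhat ^ 3 by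
      intro j hj1 hjn
      exact le_trans (hj0max j (Finset.mem_Icc.mpr ⟨hj1, hjn⟩)) hmax
    by_cases hc1 : j0 = 1
    · rw [hc1, hdf1, sub_self, abs_zero]; exact hnn
    by_cases hcn : j0 = n
    · rw [hcn, hdfn, sub_self, abs_zero]; exact hnn
    obtain ⟨k, rfl⟩ : ∃ k, j0 = k + 1 := ⟨j0 - 1, by omega⟩
    have hk1 : 1 ≤ k := by omega
    have hk2 : k + 2 ≤ n := by omega
    have hsys' := hsys (k + 1) (by omega) (by omega)
    simp only [Nat.add_sub_cancel] at hsys'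
    simp only [lamb, mub, mslope, hstep] at hsys'
    simp only [show k + 1 + 1 = k + 2 from rfl] at hsys'
    have hU : 0 < x (k + 1) - x k := hpos k hk1 (by omega)
    have hV : 0 < x (k + 2) - x (k + 1) := hpos (k + 1) (by omega) (by omega)
    have hUH : x (k + 1) - x k ≤ hhat := hub k hk1 (by omega)
    have hVH : x (k + 2) - x (k + 1) ≤ hhat := hub (k + 1) (by omega) (by omega)
    have haS := memS (k + 1) (by omega) (by omega)
    have hkS := memS k hk1 (by omega)
    have hk2S := memS (k + 2) (by omega) hk2
    have PL := taylor (x (k + 1)) haS (x k) hkS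
    have PR := taylor (x (k + 1)) haS (x (k + 2)) hk2S
    have habsL : |x k - x (k + 1)| = x (k + 1) - x k := by
      rw [abs_sub_comm]; exact abs_of_pos hU
    have habsR : |x (k + 2) - x (k + 1)| = x (k + 2) - x (k + 1) := abs_of_pos hV
    rw [habsL] at PL
    rw [habsR] at PR
    rw [show x k - x (k + 1) = -(x (k + 1) - x k) from by ring] at PL
    exact interior_ebound (x (k + 1) - x k) (x (k + 2) - x (k + 1)) hhat L
      (df k) (df (k + 1)) (df (k + 2)) (f (x k)) (f (x (k + 1))) (f (x (k + 2)))
      (derivWithin f (Set.Icc (x 1) (x n)) (x k))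
      (derivWithin f (Set.Icc (x 1) (x n)) (x (k + 2)))
      (derivWithin f (Set.Icc (x 1) (x n)) (x (k + 1)))
      (iteratedDerivWithin 2 f (Set.Icc (x 1) (x n)) (x (k + 1)))
      (iteratedDerivWithin 3 f (Set.Icc (x 1) (x n)) (x (k + 1)))
      hU hV hUH hVH hL.le hsys' PL.1 PR.1 PL.2 PR.2
      (hj0max k (Finset.mem_Icc.mpr ⟨by omega, by omega⟩))
      (hj0max (k + 2) (Finset.mem_Icc.mpr ⟨by omega, by omega⟩))
  -- per-interval estimate
  have hiS := memS i h1i (by omega)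
  have hipS := memS (i + 1) (by omega) (by omega)
  have htS : t ∈ Set.Icc (x 1) (x n) := ⟨le_trans hiS.1 ht.1, le_trans ht.2 hipS.2⟩
  have hU : 0 < x (i + 1) - x i := hpos i h1i hin
  have hUH : x (i + 1) - x i ≤ hhat := hub i h1i hin
  have P1 := taylor (x i) hiS (x (i + 1)) hipS
  have Pt := taylor (x i) hiS t htS
  have habs1 : |x (i + 1) - x i| = x (i + 1) - x i := abs_of_pos hU
  have habst : |t - x i| = t - x i := abs_of_nonneg (by linarith [ht.1])
  rw [habs1] at P1
  rw [habst] at Pt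
  have hid := hermite_decomp (x i) (x (i + 1)) t (x (i + 1) - x i) (t - x i)
    (f (x i)) (f (x (i + 1))) (df i) (df (i + 1)) (f t)
    (derivWithin f (Set.Icc (x 1) (x n)) (x i))
    (iteratedDerivWithin 2 f (Set.Icc (x 1) (x n)) (x i))
    (iteratedDerivWithin 3 f (Set.Icc (x 1) (x n)) (x i))
    (f (x (i + 1)) - (f (x i)
      + derivWithin f (Set.Icc (x 1) (x n)) (x i) * (x (i + 1) - x i)
      + iteratedDerivWithin 2 f (Set.Icc (x 1) (x n)) (x i) * (x (i + 1) - x i) ^ 2 / 2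
      + iteratedDerivWithin 3 f (Set.Icc (x 1) (x n)) (x i) * (x (i + 1) - x i) ^ 3 / 6))
    (derivWithin f (Set.Icc (x 1) (x n)) (x (i + 1))
      - (derivWithin f (Set.Icc (x 1) (x n)) (x i)
      + iteratedDerivWithin 2 f (Set.Icc (x 1) (x n)) (x i) * (x (i + 1) - x i)
      + iteratedDerivWithin 3 f (Set.Icc (x 1) (x n)) (x i) * (x (i + 1) - x i) ^ 2 / 2))
    (df (i + 1) - derivWithin f (Set.Icc (x 1) (x n)) (x (i + 1)))
    (df i - derivWithin f (Set.Icc (x 1) (x n)) (x i))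
    (f t - (f (x i)
      + derivWithin f (Set.Icc (x 1) (x n)) (x i) * (t - x i)
      + iteratedDerivWithin 2 f (Set.Icc (x 1) (x n)) (x i) * (t - x i) ^ 2 / 2
      + iteratedDerivWithin 3 f (Set.Icc (x 1) (x n)) (x i) * (t - x i) ^ 3 / 6))
    (ne_of_gt hU) (by ring) (by ring) rfl (by ring) rfl rfl
  rw [hid]
  exact final_abstract (x (i + 1) - x i) (t - x i) _ _ _ _ _ L hhat K
    hU (by linarith [ht.1]) (by linarith [ht.2]) hUH hhat_pos hL.le hK1
    P1.1 P1.2 Pt.1 (ebound i h1i (by omega)) (ebound (i + 1) (by omega) (by omega))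
end

section
/- Let f be four times continuously differentiable on [x_1, x_n] with |f⁽⁴⁾(x)| ≤ L for all x, suppose there exists K > 0 such that ĥ/h_j ≤ K for all 1 ≤ j ≤ n−1, and let ḟ_2, …, ḟ_{n−1} solve the spline system. Fix an interior index i_0 (2 ≤ i_0 ≤ n−1) and a value f̃_{i_0} with |f'(x_{i_0}) − f̃_{i_0}| ≤ T·ĥ^{p_{i_0}} (T, p_{i_0} > 0). Define modified derivative values by ḋ_{i_0} = f̃_{i_0} and ḋ_i = ḟ_i for i ≠ i_0 (with ḋ_1 = f'(x_1), ḋ_n = f'(x_n)), and let S be the piecewise cubic whose restriction to each [x_i, x_{i+1}] is the cubic Hermite interpolant of (f_i, ḋ_i), (f_{i+1}, ḋ_{i+1}). Then: (i) |ḋ_{i_0} − f'(x_{i_0})| ≤ T·ĥ^{p_{i_0}} and |ḋ_i − f'(x_i)| ≤ ((17K + K²)/16 + 1)·L·ĥ³ for every 2 ≤ i ≤ n−1 with i ≠ i_0; (ii) at every interior knot x_j with 2 ≤ j ≤ n−1 and j ∉ {i_0 − 1, i_0, i_0 + 1}, the second derivatives of the two adjacent cubic pieces of S coincide, i.e. S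 is twice continuously differentiable at x_j. -/
open Set
open scoped Nat

lemma hermite_deriv (xi xip fi fip di dip : ℝ) :
    deriv (hermite xi xip fi fip di dip) = fun t =>
      di + (((fip - fi) / (xip - xi) - di) / (xip - xi)) * (2 * (t - xi))
        + ((dip + di - 2 * ((fip - fi) / (xip - xi))) / (xip - xi) ^ 2)
            * ((2 * (t - xi)) * (t - xip) + (t - xi) ^ 2) := by
  funext t
  set A := ((fip - fi) / (xip - xi) - di) / (xip - xi) with hA
  set B := (dip + di - 2 * ((fip - fi) / (xip - xi))) / (xip - xi) ^ 2 with hB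
  have h1 : HasDerivAt (fun u : ℝ => u - xi) 1 t := (hasDerivAt_id t).sub_const xi
  have h2 : HasDerivAt (fun u : ℝ => (u - xi) ^ 2) (2 * (t - xi)) t := by
    simpa using h1.fun_pow 2
  have h3 : HasDerivAt (fun u : ℝ => (u - xi) ^ 2 * (u - xip))
      ((2 * (t - xi)) * (t - xip) + (t - xi) ^ 2 * 1) t :=
    h2.mul ((hasDerivAt_id t).sub_const xip)
  have H : HasDerivAt (hermite xi xip fi fip di dip)
      (di + A * (2 * (t - xi)) + B * ((2 * (t - xi)) * (t - xip) + (t - xi) ^ 2)) t := by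
    have := (((hasDerivAt_const t fi).fun_add (h1.const_mul di)).fun_add (h2.const_mul A)).fun_add
      (h3.const_mul B)
    convert this using 1
    · rfl
    · rfl
    · funext u; simp only [hermite]; ring
    · ring
  exact H.deriv

lemma hermite_deriv2 (xi xip fi fip di dip t : ℝ) :
    deriv (deriv (hermite xi xip fi fip di dip)) t =
      2 * (((fip - fi) / (xip - xi) - di) / (xip - xi))
        + ((dip + di - 2 * ((fip - fi) / (xip - xi))) / (xip - xi) ^ 2)
            * (2 * (t - xip) + 4 * (t - xi)) := by
  rw [hermite_deriv]
  set A := ((fip - fi) / (xip - xi) - di) / (xip - xi) with hA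
  set B := (dip + di - 2 * ((fip - fi) / (xip - xi))) / (xip - xi) ^ 2 with hB
  have h1 : HasDerivAt (fun u : ℝ => u - xi) 1 t := (hasDerivAt_id t).sub_const xi
  have h2 : HasDerivAt (fun u : ℝ => (u - xi) ^ 2) (2 * (t - xi)) t := by
    simpa using h1.fun_pow 2
  have h3 : HasDerivAt (fun u : ℝ => (2 * (u - xi)) * (u - xip) + (u - xi) ^ 2)
      ((2 * 1) * (t - xip) + (2 * (t - xi)) * 1 + 2 * (t - xi)) t :=
    (((h1.const_mul 2).mul ((hasDerivAt_id t).sub_const xip)).add h2)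
  have H : HasDerivAt (fun u : ℝ => di + A * (2 * (u - xi))
      + B * ((2 * (u - xi)) * (u - xip) + (u - xi) ^ 2))
      (2 * A + B * (2 * (t - xip) + 4 * (t - xi))) t := by
    have := ((hasDerivAt_const t di).fun_add ((h1.const_mul 2).const_mul A)).fun_add (h3.const_mul B)
    convert this using 1
    · rfl
    · rfl
    ring
  exact H.deriv

lemma taylor_two_sided {f : ℝ → ℝ} {A B C c t : ℝ} {n : ℕ} (hab : A < B)
    (hf : ContDiffOn ℝ (n + 1) f (Icc A B)) (hc : c ∈ Icc A B) (ht : t ∈ Icc A B)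
    (hC : ∀ y ∈ Icc A B, |iteratedDerivWithin (n + 1) f (Icc A B) y| ≤ C) :
    |f t - taylorWithinEval f n (Icc A B) c t| ≤ C * |t - c| ^ (n + 1) / n ! := by
  have hf' : DifferentiableOn ℝ (iteratedDerivWithin n f (Icc A B)) (Icc A B) :=
    hf.differentiableOn_iteratedDerivWithin (mod_cast n.lt_succ_self) (uniqueDiffOn_Icc hab)
  have hC0 : 0 ≤ C := le_trans (abs_nonneg _) (hC c hc)
  rcases le_or_gt c t with hct | htc
  · have hsub : Icc c t ⊆ Icc A B := Icc_subset_Icc hc.1 ht.2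
    have Ader : ∀ y ∈ Icc c t, HasDerivWithinAt
        (fun y => taylorWithinEval f n (Icc A B) y t)
        (((n ! : ℝ)⁻¹ * (t - y) ^ n) • iteratedDerivWithin (n + 1) f (Icc A B) y) (Icc c t) y :=
      fun y hy =>
        (hasDerivWithinAt_taylorWithinEval_at_Icc t hab (hsub hy) hf.of_succ hf').mono hsub
    have bound : ∀ y ∈ Ico c t,
        ‖((n ! : ℝ)⁻¹ * (t - y) ^ n) • iteratedDerivWithin (n + 1) f (Icc A B) y‖ ≤
          (n ! : ℝ)⁻¹ * |t - c| ^ n * C := by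
      rintro y ⟨h1, h2⟩
      simp only [norm_smul, Real.norm_eq_abs, abs_mul, abs_inv, Nat.abs_cast, abs_pow]
      have h4 : |t - y| ≤ |t - c| := by
        rw [abs_of_nonneg (by linarith), abs_of_nonneg (by linarith)]; linarith
      have h5 : |iteratedDerivWithin (n + 1) f (Icc A B) y| ≤ C :=
        hC y ⟨hc.1.trans h1, h2.le.trans ht.2⟩
      have hnn : (0:ℝ) ≤ ((n ! : ℕ) : ℝ)⁻¹ := by positivity
      exact mul_le_mul (mul_le_mul le_rfl (pow_le_pow_left₀ (abs_nonneg _) h4 n)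
        (pow_nonneg (abs_nonneg _) n) hnn) h5 (abs_nonneg _)
        (mul_nonneg hnn (pow_nonneg (abs_nonneg _) n))
    have key := norm_image_sub_le_of_norm_deriv_le_segment' Ader bound t (right_mem_Icc.2 hct)
    simp only [taylorWithinEval_self, Real.norm_eq_abs] at key
    refine key.trans (le_of_eq ?_)
    rw [abs_of_nonneg (by linarith : (0:ℝ) ≤ t - c)]
    field_simp
    ring
  · have hsub : Icc t c ⊆ Icc A B := Icc_subset_Icc ht.1 hc.2
    have Ader : ∀ y ∈ Icc t c, HasDerivWithinAt
        (fun y => taylorWithinEval f n (Icc A B) y t)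
        (((n ! : ℝ)⁻¹ * (t - y) ^ n) • iteratedDerivWithin (n + 1) f (Icc A B) y) (Icc t c) y :=
      fun y hy =>
        (hasDerivWithinAt_taylorWithinEval_at_Icc t hab (hsub hy) hf.of_succ hf').mono hsub
    have bound : ∀ y ∈ Ico t c,
        ‖((n ! : ℝ)⁻¹ * (t - y) ^ n) • iteratedDerivWithin (n + 1) f (Icc A B) y‖ ≤
          (n ! : ℝ)⁻¹ * |t - c| ^ n * C := by
      rintro y ⟨h1, h2⟩
      simp only [norm_smul, Real.norm_eq_abs, abs_mul, abs_inv, Nat.abs_cast, abs_pow]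
      have h4 : |t - y| ≤ |t - c| := by
        rw [abs_of_nonpos (by linarith), abs_of_nonpos (by linarith)]; linarith
      have h5 : |iteratedDerivWithin (n + 1) f (Icc A B) y| ≤ C :=
        hC y ⟨ht.1.trans h1, h2.le.trans hc.2⟩
      have hnn : (0:ℝ) ≤ ((n ! : ℕ) : ℝ)⁻¹ := by positivity
      exact mul_le_mul (mul_le_mul le_rfl (pow_le_pow_left₀ (abs_nonneg _) h4 n)
        (pow_nonneg (abs_nonneg _) n) hnn) h5 (abs_nonneg _)
        (mul_nonneg hnn (pow_nonneg (abs_nonneg _) n))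
    have key := norm_image_sub_le_of_norm_deriv_le_segment' Ader bound c (right_mem_Icc.2 htc.le)
    simp only [taylorWithinEval_self, Real.norm_eq_abs] at key
    rw [abs_sub_comm] at key
    refine key.trans (le_of_eq ?_)
    rw [abs_of_nonpos (by linarith : t - c ≤ (0:ℝ))]
    field_simp
    ring

lemma c2_core (u v m1 m2 dm d0 dp : ℝ) (hu : u ≠ 0) (hv : v ≠ 0) (hw : u + v ≠ 0)
    (h : v / (u + v) * dm + 2 * d0 + u / (u + v) * dp
      = 3 * (v / (u + v) * m1 + u / (u + v) * m2)) :
    2 * ((m1 - dm) / u) + (d0 + dm - 2 * m1) / u ^ 2 * (2 * 0 + 4 * u)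
    = 2 * ((m2 - d0) / v) + (dp + d0 - 2 * m2) / v ^ 2 * (2 * -v + 4 * 0) := by
  have h2 : v * dm + 2 * d0 * (u + v) + u * dp = 3 * (v * m1 + u * m2) := by
    field_simp at h
    linear_combination h
  have L1 : 2 * ((m1 - dm) / u) + (d0 + dm - 2 * m1) / u ^ 2 * (2 * 0 + 4 * u)
      = (2 * dm + 4 * d0 - 6 * m1) / u := by field_simp; ring
  have R1 : 2 * ((m2 - d0) / v) + (dp + d0 - 2 * m2) / v ^ 2 * (2 * -v + 4 * 0)
      = (6 * m2 - 4 * d0 - 2 * dp) / v := by field_simp; ring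
  rw [L1, R1, div_eq_div_iff hu hv]
  linear_combination 2 * h2

set_option maxHeartbeats 1600000 in
/-- Monotone spline with maximum order: replacing, at a single interior index
`i₀`, the spline-system derivative value by `f̃ᵢ₀` with
`|f'(xᵢ₀) − f̃ᵢ₀| ≤ T·ĥ^p` preserves (i) the accuracy of all the other
derivative values and (ii) `C²` matching of second derivatives of the two
adjacent cubic pieces at every interior knot `xⱼ`, `j ∉ {i₀−1, i₀, i₀+1}`. -/
theorem monotone_spline_max_order (n : ℕ) (x : ℕ → ℝ) (f : ℝ → ℝ)
    (df dd : ℕ → ℝ) (L K T p hhat ftil : ℝ) (i0 : ℕ) (hn : 3 ≤ n)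
    (hx : ∀ i, 1 ≤ i → i ≤ n - 1 → x i < x (i + 1))
    (hf : ContDiffOn ℝ 4 f (Set.Icc (x 1) (x n)))
    (hL : 0 < L)
    (hLb : ∀ t ∈ Set.Icc (x 1) (x n),
      |iteratedDerivWithin 4 f (Set.Icc (x 1) (x n)) t| ≤ L)
    (hub : ∀ i, 1 ≤ i → i ≤ n - 1 → hstep x i ≤ hhat)
    (hach : ∃ i, 1 ≤ i ∧ i ≤ n - 1 ∧ hhat = hstep x i)
    (hK : 0 < K)
    (hKb : ∀ j, 1 ≤ j → j ≤ n - 1 → hhat / hstep x j ≤ K)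
    (hdf1 : df 1 = derivWithin f (Set.Icc (x 1) (x n)) (x 1))
    (hdfn : df n = derivWithin f (Set.Icc (x 1) (x n)) (x n))
    (hsys : ∀ j, 2 ≤ j → j ≤ n - 1 →
      lamb x (j - 1) * df (j - 1) + 2 * df j + mub x (j - 1) * df (j + 1)
        = 3 * (lamb x (j - 1) * mslope x f (j - 1) + mub x (j - 1) * mslope x f j))
    (hi0 : 2 ≤ i0) (hi0n : i0 ≤ n - 1) (hT : 0 < T) (hp : 0 < p)
    (hftil : |derivWithin f (Set.Icc (x 1) (x n)) (x i0) - ftil| ≤ T * hhat ^ p)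
    (hdd : ∀ i, i ≠ i0 → dd i = df i) (hddi0 : dd i0 = ftil) :
    (|dd i0 - derivWithin f (Set.Icc (x 1) (x n)) (x i0)| ≤ T * hhat ^ p ∧
      ∀ i, 2 ≤ i → i ≤ n - 1 → i ≠ i0 →
        |dd i - derivWithin f (Set.Icc (x 1) (x n)) (x i)|
          ≤ ((17 * K + K ^ 2) / 16 + 1) * L * hhat ^ 3) ∧
    (∀ j, 2 ≤ j → j ≤ n - 1 → j ≠ i0 - 1 → j ≠ i0 → j ≠ i0 + 1 →
      deriv (deriv (hermite (x (j - 1)) (x j) (f (x (j - 1))) (f (x j))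
          (dd (j - 1)) (dd j))) (x j)
        = deriv (deriv (hermite (x j) (x (j + 1)) (f (x j)) (f (x (j + 1)))
            (dd j) (dd (j + 1)))) (x j)) := by
  have hstep_pos : ∀ i, 1 ≤ i → i ≤ n - 1 → 0 < hstep x i := fun i h1 h2 =>
    sub_pos.2 (hx i h1 h2)
  have hmono' : ∀ d i, 1 ≤ i → i + d ≤ n → x i ≤ x (i + d) := by
    intro d
    induction d with
    | zero => intro i _ _; simp
    | succ m ih =>
      intro i h1 h2
      have h3 := ih i h1 (by omega)
      have h4 : x (i + m) < x (i + m + 1) := hx (i + m) (by omega) (by omega)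
      have : i + (m + 1) = i + m + 1 := by omega
      rw [this]; linarith
  have hmono : ∀ i k, 1 ≤ i → i ≤ k → k ≤ n → x i ≤ x k := by
    intro i k h1 h2 h3
    have : k = i + (k - i) := by omega
    rw [this]; exact hmono' (k - i) i h1 (by omega)
  have hx1n : x 1 < x n := by
    have h1 : x 1 < x 2 := hx 1 (by omega) (by omega)
    have h2 : x 2 ≤ x n := hmono 2 n (by omega) (by omega) (by omega)
    linarith
  have hmem : ∀ i, 1 ≤ i → i ≤ n → x i ∈ Set.Icc (x 1) (x n) := fun i h1 h2 =>
    ⟨hmono 1 i (by omega) h1 h2, hmono i n h1 h2 le_rfl⟩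
  have hud : UniqueDiffOn ℝ (Set.Icc (x 1) (x n)) := uniqueDiffOn_Icc hx1n
  have hhat_pos : 0 < hhat := by
    obtain ⟨i, h1, h2, h3⟩ := hach
    rw [h3]; exact hstep_pos i h1 h2
  set s : Set ℝ := Set.Icc (x 1) (x n) with hsdef
  -- residual bound
  have hres : ∀ j, 2 ≤ j → j ≤ n - 1 →
      |3 * (lamb x (j - 1) * mslope x f (j - 1) + mub x (j - 1) * mslope x f j)
        - (lamb x (j - 1) * derivWithin f s (x (j - 1)) + 2 * derivWithin f s (x j)
           + mub x (j - 1) * derivWithin f s (x (j + 1)))| ≤ L * hhat ^ 3 := by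
    intro j hj2 hjn
    have e1 : j - 1 + 1 = j := by omega
    have hc : x j ∈ s := hmem j (by omega) (by omega)
    have hmm : x (j - 1) ∈ s := hmem (j - 1) (by omega) (by omega)
    have hpp : x (j + 1) ∈ s := hmem (j + 1) (by omega) (by omega)
    have hu : 0 < x j - x (j - 1) := by
      have := hstep_pos (j - 1) (by omega) (by omega)
      rwa [hstep, e1] at this
    have hv : 0 < x (j + 1) - x j := by
      have := hstep_pos j (by omega) hjn
      rwa [hstep] at this
    have hub1 : x j - x (j - 1) ≤ hhat := by
      have := hub (j - 1) (by omega) (by omega)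
      rwa [hstep, e1] at this
    have hub2 : x (j + 1) - x j ≤ hhat := by
      have := hub j (by omega) hjn
      rwa [hstep] at this
    set c := x j with hcdef
    set xm := x (j - 1) with hxmdef
    set xp := x (j + 1) with hxpdef
    -- smoothness of f as 3+1 and of f' as 2+1
    have hf4 : ContDiffOn ℝ ((3 : ℕ) + 1) f s := by exact_mod_cast hf
    have hf'cd : ContDiffOn ℝ ((2 : ℕ) + 1) (derivWithin f s) s := by
      have : ContDiffOn ℝ 3 (derivWithin f s) s := hf.derivWithin hud (by norm_num)
      exact_mod_cast this
    have hLb4 : ∀ y ∈ s, |iteratedDerivWithin ((3 : ℕ) + 1) f s y| ≤ L := fun y hy => hLb y hy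
    have hLb3 : ∀ y ∈ s, |iteratedDerivWithin ((2 : ℕ) + 1) (derivWithin f s) s y| ≤ L := by
      intro y hy
      have heq : iteratedDerivWithin (3 + 1) f s y
          = iteratedDerivWithin 3 (derivWithin f s) s y := congrFun iteratedDerivWithin_succ' y
      rw [show (2 : ℕ) + 1 = 3 from rfl, ← heq]
      exact hLb y hy
    -- Taylor coefficients at c
    set d2 : ℝ := iteratedDerivWithin 2 f s c with hd2
    set d3 : ℝ := iteratedDerivWithin 3 f s c with hd3
    have hsucc1 : iteratedDerivWithin 1 (derivWithin f s) s c = d2 :=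
      (congrFun iteratedDerivWithin_succ' c).symm
    have hsucc2 : iteratedDerivWithin 2 (derivWithin f s) s c = d3 :=
      (congrFun iteratedDerivWithin_succ' c).symm
    have hPeq : ∀ t, taylorWithinEval f 3 s c t
        = f c + derivWithin f s c * (t - c) + d2 / 2 * (t - c) ^ 2 + d3 / 6 * (t - c) ^ 3 := by
      intro t
      rw [taylor_within_apply]
      simp [Finset.sum_range_succ, iteratedDerivWithin_one, Nat.factorial]
      ring
    have hQeq : ∀ t, taylorWithinEval (derivWithin f s) 2 s c t
        = derivWithin f s c + d2 * (t - c) + d3 / 2 * (t - c) ^ 2 := by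
      intro t
      rw [taylor_within_apply]
      simp [Finset.sum_range_succ, hsucc1, hsucc2,
        iteratedDerivWithin_one, Nat.factorial]
      ring
    -- remainder bounds
    have hEm := taylor_two_sided (n := 3) hx1n hf4 hc hmm hLb4
    have hEp := taylor_two_sided (n := 3) hx1n hf4 hc hpp hLb4
    have hE'm := taylor_two_sided (n := 2) hx1n hf'cd hc hmm hLb3
    have hE'p := taylor_two_sided (n := 2) hx1n hf'cd hc hpp hLb3
    rw [hPeq] at hEm hEp
    rw [hQeq] at hE'm hE'p
    have habsm : |xm - c| = c - xm := by rw [abs_of_nonpos (by linarith)]; ring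
    have habsp : |xp - c| = xp - c := by rw [abs_of_nonneg (by linarith)]
    rw [habsm] at hEm hE'm
    rw [habsp] at hEp hE'p
    have hfac3 : ((3 : ℕ)! : ℝ) = 6 := by norm_num [Nat.factorial]
    have hfac2 : ((2 : ℕ)! : ℝ) = 2 := by norm_num [Nat.factorial]
    rw [hfac3] at hEm hEp
    rw [hfac2] at hE'm hE'p
    -- abbreviations for the errors
    set Em : ℝ := f xm - (f c + derivWithin f s c * (xm - c) + d2 / 2 * (xm - c) ^ 2
      + d3 / 6 * (xm - c) ^ 3) with hEmdef
    set Ep : ℝ := f xp - (f c + derivWithin f s c * (xp - c) + d2 / 2 * (xp - c) ^ 2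
      + d3 / 6 * (xp - c) ^ 3) with hEpdef
    set Fm : ℝ := derivWithin f s xm - (derivWithin f s c + d2 * (xm - c)
      + d3 / 2 * (xm - c) ^ 2) with hFmdef
    set Fp : ℝ := derivWithin f s xp - (derivWithin f s c + d2 * (xp - c)
      + d3 / 2 * (xp - c) ^ 2) with hFpdef
    set u : ℝ := c - xm with hudef
    set v : ℝ := xp - c with hvdef
    -- the key algebraic identity
    have hlamb : lamb x (j - 1) = v / (u + v) := by
      rw [lamb, hstep, hstep, e1]
    have hmub : mub x (j - 1) = u / (u + v) := by
      rw [mub, hstep, hstep, e1]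
    have hms1 : mslope x f (j - 1) = (f c - f xm) / u := by
      rw [mslope, e1]
    have hms2 : mslope x f j = (f xp - f c) / v := by
      rw [mslope]
    have huv : 0 < u + v := by linarith
    clear_value s c xm xp u v Em Ep Fm Fp
    have key : 3 * (lamb x (j - 1) * mslope x f (j - 1) + mub x (j - 1) * mslope x f j)
        - (lamb x (j - 1) * derivWithin f s xm + 2 * derivWithin f s c
           + mub x (j - 1) * derivWithin f s xp)
        = (v / (u + v)) * (-(3 / u) * Em - Fm) + (u / (u + v)) * ((3 / v) * Ep - Fp) := by
      rw [hlamb, hmub, hms1, hms2, hEmdef, hEpdef, hFmdef, hFpdef]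
      have hxmu : xm - c = -u := by rw [hudef]; ring
      rw [hxmu]
      field_simp
      ring
    rw [key]
    -- now bound the two pieces
    have hbm : |(-(3 / u)) * Em - Fm| ≤ L * u ^ 3 := by
      have t1 : |(-(3 / u)) * Em| = (3 / u) * |Em| := by
        rw [abs_mul, abs_neg, abs_of_nonneg (by positivity)]
      have t2 : |(-(3 / u)) * Em - Fm| ≤ |(-(3 / u)) * Em| + |Fm| := abs_sub _ _
      rw [t1] at t2
      have t3 : (3 / u) * |Em| ≤ (3 / u) * (L * u ^ 4 / 6) :=
        mul_le_mul_of_nonneg_left hEm (by positivity)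
      have t4 : (3 / u) * (L * u ^ 4 / 6) = L * u ^ 3 / 2 := by field_simp; ring
      have t5 : |Fm| ≤ L * u ^ 3 / 2 := hE'm
      linarith
    have hbp : |(3 / v) * Ep - Fp| ≤ L * v ^ 3 := by
      have t1 : |(3 / v) * Ep| = (3 / v) * |Ep| := by
        rw [abs_mul, abs_of_nonneg (by positivity)]
      have t2 : |(3 / v) * Ep - Fp| ≤ |(3 / v) * Ep| + |Fp| := abs_sub _ _
      rw [t1] at t2
      have t3 : (3 / v) * |Ep| ≤ (3 / v) * (L * v ^ 4 / 6) :=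
        mul_le_mul_of_nonneg_left hEp (by positivity)
      have t4 : (3 / v) * (L * v ^ 4 / 6) = L * v ^ 3 / 2 := by field_simp; ring
      have t5 : |Fp| ≤ L * v ^ 3 / 2 := hE'p
      linarith
    have hu3 : u ^ 3 ≤ hhat ^ 3 := pow_le_pow_left₀ hu.le hub1 3
    have hv3 : v ^ 3 ≤ hhat ^ 3 := pow_le_pow_left₀ hv.le hub2 3
    have hlnn : 0 ≤ v / (u + v) := by positivity
    have hmnn : 0 ≤ u / (u + v) := by positivity
    calc |(v / (u + v)) * (-(3 / u) * Em - Fm) + (u / (u + v)) * ((3 / v) * Ep - Fp)|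
        ≤ (v / (u + v)) * |(-(3 / u)) * Em - Fm| + (u / (u + v)) * |(3 / v) * Ep - Fp| := by
          refine (abs_add_le _ _).trans ?_
          rw [abs_mul, abs_mul, abs_of_nonneg hlnn, abs_of_nonneg hmnn]
      _ ≤ (v / (u + v)) * (L * u ^ 3) + (u / (u + v)) * (L * v ^ 3) := by
          exact add_le_add (mul_le_mul_of_nonneg_left hbm hlnn)
            (mul_le_mul_of_nonneg_left hbp hmnn)
      _ ≤ L * hhat ^ 3 := by
          rw [div_mul_eq_mul_div, div_mul_eq_mul_div, ← add_div, div_le_iff₀ huv]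
          have p1 : v * (L * u ^ 3) ≤ v * (L * hhat ^ 3) :=
            mul_le_mul_of_nonneg_left (mul_le_mul_of_nonneg_left hu3 hL.le) hv.le
          have p2 : u * (L * v ^ 3) ≤ u * (L * hhat ^ 3) :=
            mul_le_mul_of_nonneg_left (mul_le_mul_of_nonneg_left hv3 hL.le) hu.le
          linarith [p1, p2]
  -- error bound for all interior df values
  have herr : ∀ i, 2 ≤ i → i ≤ n - 1 →
      |df i - derivWithin f s (x i)| ≤ L * hhat ^ 3 := by
    have hne : (Finset.Icc 2 (n - 1)).Nonempty := ⟨2, by simp; omega⟩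
    obtain ⟨j, hjmem, hjmax⟩ := Finset.exists_max_image (Finset.Icc 2 (n - 1))
      (fun i => |df i - derivWithin f s (x i)|) hne
    simp only [Finset.mem_Icc] at hjmem
    obtain ⟨hj2, hjn⟩ := hjmem
    have hEj : ∀ i, 2 ≤ i → i ≤ n - 1 →
        |df i - derivWithin f s (x i)| ≤ |df j - derivWithin f s (x j)| := by
      intro i h2 h1; exact hjmax i (Finset.mem_Icc.2 ⟨h2, h1⟩)
    have e1 : j - 1 + 1 = j := by omega
    have hEm : |df (j - 1) - derivWithin f s (x (j - 1))|
        ≤ |df j - derivWithin f s (x j)| := by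
      by_cases hcase : 2 ≤ j - 1
      · exact hEj (j - 1) hcase (by omega)
      · have h1 : j - 1 = 1 := by omega
        rw [h1, hdf1]
        simp [abs_nonneg]
    have hEp : |df (j + 1) - derivWithin f s (x (j + 1))|
        ≤ |df j - derivWithin f s (x j)| := by
      by_cases hcase : j + 1 ≤ n - 1
      · exact hEj (j + 1) (by omega) hcase
      · have h1 : j + 1 = n := by omega
        rw [h1, hdfn]
        simp [abs_nonneg]
    have hu : 0 < hstep x (j - 1) := hstep_pos _ (by omega) (by omega)
    have hv : 0 < hstep x j := hstep_pos _ (by omega) (by omega)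
    have hlam : lamb x (j - 1) = hstep x j / (hstep x (j - 1) + hstep x j) := by
      rw [lamb, e1]
    have hmu : mub x (j - 1) = hstep x (j - 1) / (hstep x (j - 1) + hstep x j) := by
      rw [mub, e1]
    have hl0 : 0 ≤ lamb x (j - 1) := by rw [hlam]; positivity
    have hm0 : 0 ≤ mub x (j - 1) := by rw [hmu]; positivity
    have hlm1 : lamb x (j - 1) + mub x (j - 1) = 1 := by
      rw [hlam, hmu, ← add_div, add_comm (hstep x j) (hstep x (j - 1))]
      exact div_self (by linarith)
    have hrow := hsys j hj2 hjn
    have hres' := hres j hj2 hjn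
    have heq : 2 * (df j - derivWithin f s (x j)) =
        (3 * (lamb x (j - 1) * mslope x f (j - 1) + mub x (j - 1) * mslope x f j)
          - (lamb x (j - 1) * derivWithin f s (x (j - 1)) + 2 * derivWithin f s (x j)
             + mub x (j - 1) * derivWithin f s (x (j + 1))))
        - lamb x (j - 1) * (df (j - 1) - derivWithin f s (x (j - 1)))
        - mub x (j - 1) * (df (j + 1) - derivWithin f s (x (j + 1))) := by
      linear_combination hrow
    have hkey : |df j - derivWithin f s (x j)| ≤ L * hhat ^ 3 := by
      set R := 3 * (lamb x (j - 1) * mslope x f (j - 1) + mub x (j - 1) * mslope x f j)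
          - (lamb x (j - 1) * derivWithin f s (x (j - 1)) + 2 * derivWithin f s (x j)
             + mub x (j - 1) * derivWithin f s (x (j + 1))) with hR
      set a := df (j - 1) - derivWithin f s (x (j - 1)) with ha
      set b := df (j + 1) - derivWithin f s (x (j + 1)) with hb
      set e0 := df j - derivWithin f s (x j) with he0
      set lm := lamb x (j - 1) with hlmd
      set mu := mub x (j - 1) with hmud
      clear_value R a b e0 lm mu
      have t1 : |2 * e0| = 2 * |e0| := by
        rw [abs_mul]; norm_num
      have t2 : |R - lm * a - mu * b| ≤ |R| + |lm * a| + |mu * b| := by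
        calc |R - lm * a - mu * b| ≤ |R - lm * a| + |mu * b| := abs_sub _ _
          _ ≤ |R| + |lm * a| + |mu * b| := by
              have := abs_sub R (lm * a)
              linarith
      rw [abs_mul, abs_of_nonneg hl0] at t2
      rw [abs_mul, abs_of_nonneg hm0] at t2
      have t3 : lm * |a| ≤ lm * |e0| := mul_le_mul_of_nonneg_left hEm hl0
      have t4 : mu * |b| ≤ mu * |e0| := mul_le_mul_of_nonneg_left hEp hm0
      have t5 : lm * |e0| + mu * |e0| = |e0| := by
        rw [← add_mul, hlm1, one_mul]
      have t6 : 2 * |e0| ≤ |R| + |e0| := by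
        rw [← t1, heq]; linarith
      linarith
    intro i hi2 hin
    exact (hEj i hi2 hin).trans hkey
  refine ⟨⟨?_, ?_⟩, ?_⟩
  · rw [hddi0, abs_sub_comm]; exact hftil
  · intro i h2 hn1 hne
    rw [hdd i hne]
    have h := herr i h2 hn1
    have hfac : L * hhat ^ 3 ≤ ((17 * K + K ^ 2) / 16 + 1) * L * hhat ^ 3 := by
      have h1 : 0 < L * hhat ^ 3 := by positivity
      have hKK : 0 ≤ (17 * K + K ^ 2) / 16 := by
        have := sq_nonneg K
        have := hK.le
        linarith
      have h2 : 0 ≤ (17 * K + K ^ 2) / 16 * (L * hhat ^ 3) := mul_nonneg hKK h1.le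
      linarith
    exact h.trans hfac
  · intro j hj2 hjn hne1 hne2 hne3
    have e1 : j - 1 + 1 = j := by omega
    have hdm : dd (j - 1) = df (j - 1) := hdd _ (by omega)
    have hd0 : dd j = df j := hdd _ hne2
    have hdp : dd (j + 1) = df (j + 1) := hdd _ (by omega)
    have hu : 0 < x j - x (j - 1) := by
      have := hstep_pos (j - 1) (by omega) (by omega)
      rwa [hstep, e1] at this
    have hv : 0 < x (j + 1) - x j := by
      have := hstep_pos j (by omega) hjn
      rwa [hstep] at this
    have hrow := hsys j hj2 hjn
    simp only [lamb, mub, mslope, hstep, e1] at hrow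
    rw [hermite_deriv2, hermite_deriv2, hdm, hd0, hdp]
    have hu' : x j - x (j - 1) ≠ 0 := ne_of_gt hu
    have hv' : x (j + 1) - x j ≠ 0 := ne_of_gt hv
    have hw' : x j - x (j - 1) + (x (j + 1) - x j) ≠ 0 := by linarith
    rw [show x j - x j = (0:ℝ) from sub_self _,
      show x j - x (j + 1) = -(x (j + 1) - x j) by ring]
    exact c2_core (x j - x (j - 1)) (x (j + 1) - x j)
      ((f (x j) - f (x (j - 1))) / (x j - x (j - 1)))
      ((f (x (j + 1)) - f (x j)) / (x (j + 1) - x j))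
      (df (j - 1)) (df j) (df (j + 1)) hu' hv' hw' hrow
end

section
/- Assume ĥ < 1, f is four times continuously differentiable on [x_1, x_{i_0}] with |f⁽⁴⁾(x)| ≤ L there, there exists K > 0 with ĥ/h_j ≤ K for all 1 ≤ j ≤ i_0 − 1, and i_0 > 3 − log₂(ĥ). Let f̃_{i_0} satisfy |f'(x_{i_0}) − f̃_{i_0}| ≤ T·ĥ^{p} with T, p > 0, and let ḟ_2, …, ḟ_{i_0−1} solve the left subsystem. Then there exists a constant C depending only on K, L and T such that, with l_0 := ⌊(i_0 − 2) + log₂(ĥ)⌋ + 1: |ḟ_i − f'(x_i)| ≤ C·ĥ^{min(3, p+1)} for all 2 ≤ i ≤ l_0, and |ḟ_i − f'(x_i)| ≤ C·ĥ^{min(3, p)} for all l_0 < i ≤ i_0 − 1. -/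
open Set

private lemma hasDerivWithinAt_iter {u v : ℝ} {f : ℝ → ℝ} (huv : u < v)
    (hf : ContDiffOn ℝ 4 f (Icc u v)) (k : ℕ) (hk : k < 4) {t : ℝ} (ht : t ∈ Icc u v) :
    HasDerivWithinAt (iteratedDerivWithin k f (Icc u v))
      (iteratedDerivWithin (k+1) f (Icc u v) t) (Icc u v) t := by
  have hs : UniqueDiffOn ℝ (Icc u v) := uniqueDiffOn_Icc huv
  have hd := hf.differentiableOn_iteratedDerivWithin (n := 4) (m := k)
    (by exact_mod_cast hk) hs
  have := (hd t ht).hasDerivWithinAt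
  rwa [← iteratedDerivWithin_succ] at this

private lemma abs_sub_le_of_uIcc {a b t : ℝ} (ht : t ∈ uIcc a b) : |b - t| ≤ |b - a| := by
  rcases le_total a b with h | h
  · rw [uIcc_of_le h] at ht
    rw [abs_of_nonneg (by linarith [ht.2] : (0:ℝ) ≤ b - t), abs_of_nonneg (by linarith : (0:ℝ) ≤ b - a)]
    linarith [ht.1]
  · rw [uIcc_of_ge h] at ht
    rw [abs_of_nonpos (by linarith [ht.1] : b - t ≤ 0), abs_of_nonpos (by linarith : b - a ≤ 0)]
    linarith [ht.2]

private lemma taylor3_bound {u v L : ℝ} {f : ℝ → ℝ} (huv : u < v)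
    (hf : ContDiffOn ℝ 4 f (Icc u v))
    (hL : ∀ t ∈ Icc u v, |iteratedDerivWithin 4 f (Icc u v) t| ≤ L)
    {a b : ℝ} (ha : a ∈ Icc u v) (hb : b ∈ Icc u v) :
    |f b - f a - derivWithin f (Icc u v) a * (b - a)
      - iteratedDerivWithin 2 f (Icc u v) a * (b - a)^2 / 2
      - iteratedDerivWithin 3 f (Icc u v) a * (b - a)^3 / 6|
      ≤ L * |b - a|^4 / 6 := by
  set s := Icc u v with hsdef
  set g : ℕ → ℝ → ℝ := fun k => iteratedDerivWithin k f s with hg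
  have hL0 : 0 ≤ L := le_trans (abs_nonneg _) (hL a ha)
  set F : ℝ → ℝ := fun t => f b - f t - g 1 t * (b - t) - g 2 t * (b - t)^2/2
    - g 3 t * (b - t)^3/6 with hF
  have hsub : uIcc a b ⊆ s := uIcc_subset_Icc ha hb
  have hder : ∀ t ∈ uIcc a b, HasDerivWithinAt F (-(g 4 t) * (b - t)^3/6) (uIcc a b) t := by
    intro t ht
    have hts := hsub ht
    have h0 : HasDerivWithinAt f (g 1 t) s t := by
      have := hasDerivWithinAt_iter huv hf 0 (by norm_num) hts
      simpa only [iteratedDerivWithin_zero] using this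
    have hid : HasDerivWithinAt (fun y : ℝ => b - y) (-1) s t := by
      simpa using (hasDerivWithinAt_id t s).const_sub b
    have h1 := (hasDerivWithinAt_iter huv hf 1 (by norm_num) hts).mul hid
    have h2 := ((hasDerivWithinAt_iter huv hf 2 (by norm_num) hts).mul (hid.pow 2)).div_const 2
    have h3 := ((hasDerivWithinAt_iter huv hf 3 (by norm_num) hts).mul (hid.pow 3)).div_const 6
    have hall := (((h0.const_sub (f b)).sub h1).sub h2).sub h3
    have : HasDerivWithinAt F (-(g 4 t) * (b - t)^3/6) s t := by
      refine hall.congr_deriv ?_; symm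
      show -(g 4 t) * (b - t)^3/6 = _
      simp only [g, s, Pi.pow_apply, Nat.reduceAdd, Nat.reduceSub, Nat.cast_ofNat]
      ring
    exact this.mono hsub
  have hbnd : ∀ t ∈ uIcc a b, ‖-(g 4 t) * (b - t)^3/6‖ ≤ L * |b - a|^3/6 := by
    intro t ht
    have h1 : |g 4 t| ≤ L := hL t (hsub ht)
    have h2 : |b - t| ≤ |b - a| := abs_sub_le_of_uIcc ht
    have h3 : |b - t|^3 ≤ |b - a|^3 := by
      exact pow_le_pow_left₀ (abs_nonneg _) h2 3
    calc ‖-(g 4 t) * (b - t)^3/6‖ = |g 4 t| * |b - t|^3/6 := by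
          rw [Real.norm_eq_abs, abs_div, abs_mul, abs_neg, abs_pow]; norm_num
      _ ≤ L * |b - a|^3/6 := by
          apply div_le_div_of_nonneg_right ?_ (by norm_num)
          exact mul_le_mul h1 h3 (by positivity) hL0
  have key := (convex_uIcc a b).norm_image_sub_le_of_norm_hasDerivWithin_le hder hbnd
    (right_mem_uIcc) (left_mem_uIcc)
  have hFb : F b = 0 := by simp [hF]
  have hFa : F a = f b - f a - derivWithin f s a * (b - a)
      - iteratedDerivWithin 2 f s a * (b - a)^2 / 2
      - iteratedDerivWithin 3 f s a * (b - a)^3 / 6 := by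
    simp only [hF, hg, iteratedDerivWithin_one]
  rw [hFb, sub_zero, Real.norm_eq_abs, hFa] at key
  calc |f b - f a - derivWithin f s a * (b - a)
      - iteratedDerivWithin 2 f s a * (b - a)^2 / 2
      - iteratedDerivWithin 3 f s a * (b - a)^3 / 6|
      ≤ L * |b - a|^3/6 * ‖a - b‖ := key
    _ = L * |b - a|^4/6 := by
        rw [Real.norm_eq_abs, abs_sub_comm]; ring

private lemma taylor2_deriv_bound {u v L : ℝ} {f : ℝ → ℝ} (huv : u < v)
    (hf : ContDiffOn ℝ 4 f (Icc u v))
    (hL : ∀ t ∈ Icc u v, |iteratedDerivWithin 4 f (Icc u v) t| ≤ L)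
    {a b : ℝ} (ha : a ∈ Icc u v) (hb : b ∈ Icc u v) :
    |derivWithin f (Icc u v) b - derivWithin f (Icc u v) a
      - iteratedDerivWithin 2 f (Icc u v) a * (b - a)
      - iteratedDerivWithin 3 f (Icc u v) a * (b - a)^2 / 2|
      ≤ L * |b - a|^3 / 2 := by
  set s := Icc u v with hsdef
  set g : ℕ → ℝ → ℝ := fun k => iteratedDerivWithin k f s with hg
  have hL0 : 0 ≤ L := le_trans (abs_nonneg _) (hL a ha)
  set F : ℝ → ℝ := fun t => g 1 b - g 1 t - g 2 t * (b - t) - g 3 t * (b - t)^2/2 with hF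
  have hsub : uIcc a b ⊆ s := uIcc_subset_Icc ha hb
  have hder : ∀ t ∈ uIcc a b, HasDerivWithinAt F (-(g 4 t) * (b - t)^2/2) (uIcc a b) t := by
    intro t ht
    have hts := hsub ht
    have hid : HasDerivWithinAt (fun y : ℝ => b - y) (-1) s t := by
      simpa using (hasDerivWithinAt_id t s).const_sub b
    have h1 := (hasDerivWithinAt_iter huv hf 1 (by norm_num) hts).const_sub (g 1 b)
    have h2 := (hasDerivWithinAt_iter huv hf 2 (by norm_num) hts).mul hid
    have h3 := ((hasDerivWithinAt_iter huv hf 3 (by norm_num) hts).mul (hid.pow 2)).div_const 2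
    have hall := (h1.sub h2).sub h3
    have : HasDerivWithinAt F (-(g 4 t) * (b - t)^2/2) s t := by
      refine hall.congr_deriv ?_; symm
      show -(g 4 t) * (b - t)^2/2 = _
      simp only [g, s, Pi.pow_apply, Nat.reduceAdd, Nat.reduceSub, Nat.cast_ofNat]
      ring
    exact this.mono hsub
  have hbnd : ∀ t ∈ uIcc a b, ‖-(g 4 t) * (b - t)^2/2‖ ≤ L * |b - a|^2/2 := by
    intro t ht
    have h1 : |g 4 t| ≤ L := hL t (hsub ht)
    have h3 : |b - t|^2 ≤ |b - a|^2 :=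
      pow_le_pow_left₀ (abs_nonneg _) (abs_sub_le_of_uIcc ht) 2
    calc ‖-(g 4 t) * (b - t)^2/2‖ = |g 4 t| * |b - t|^2/2 := by
          rw [Real.norm_eq_abs, abs_div, abs_mul, abs_neg, abs_pow]; norm_num
      _ ≤ L * |b - a|^2/2 := by
          apply div_le_div_of_nonneg_right ?_ (by norm_num)
          exact mul_le_mul h1 h3 (by positivity) hL0
  have key := (convex_uIcc a b).norm_image_sub_le_of_norm_hasDerivWithin_le hder hbnd
    (right_mem_uIcc) (left_mem_uIcc)
  have hFb : F b = 0 := by simp [hF]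
  have hud : UniqueDiffOn ℝ s := uniqueDiffOn_Icc huv
  have hFa : F a = derivWithin f s b - derivWithin f s a
      - iteratedDerivWithin 2 f s a * (b - a)
      - iteratedDerivWithin 3 f s a * (b - a)^2 / 2 := by
    simp only [hF, hg, iteratedDerivWithin_one]
  rw [hFb, sub_zero, Real.norm_eq_abs, hFa] at key
  calc |derivWithin f s b - derivWithin f s a
      - iteratedDerivWithin 2 f s a * (b - a)
      - iteratedDerivWithin 3 f s a * (b - a)^2 / 2|
      ≤ L * |b - a|^2/2 * ‖a - b‖ := key
    _ = L * |b - a|^3/2 := by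
        rw [Real.norm_eq_abs, abs_sub_comm]; ring

private lemma comb_abs_bound {lam mu a1 a2 a3 a4 b1 b2 b3 b4 : ℝ}
    (hlam : 0 ≤ lam) (hmu : 0 ≤ mu) (h1 : |a1| ≤ b1) (h2 : |a2| ≤ b2)
    (h3 : |a3| ≤ b3) (h4 : |a4| ≤ b4) :
    |3*(lam*a1 + mu*a2) - lam*a3 - mu*a4| ≤ 3*(lam*b1 + mu*b2) + lam*b3 + mu*b4 := by
  have u1 := mul_le_mul_of_nonneg_left (abs_le.1 h1).2 hlam
  have v1 := mul_le_mul_of_nonneg_left (abs_le.1 h1).1 hlam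
  have u2 := mul_le_mul_of_nonneg_left (abs_le.1 h2).2 hmu
  have v2 := mul_le_mul_of_nonneg_left (abs_le.1 h2).1 hmu
  have u3 := mul_le_mul_of_nonneg_left (abs_le.1 h3).2 hlam
  have v3 := mul_le_mul_of_nonneg_left (abs_le.1 h3).1 hlam
  have u4 := mul_le_mul_of_nonneg_left (abs_le.1 h4).2 hmu
  have v4 := mul_le_mul_of_nonneg_left (abs_le.1 h4).1 hmu
  rw [mul_neg] at v1 v2 v3 v4
  rw [abs_le]
  constructor <;> linarith


set_option maxHeartbeats 1000000 in
/-- Accuracy of the derivative values obtained from the left subsystem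
`A_{i₀⁻}·Ḟ = B_{i₀⁻}` (written row-wise, with boundary values `ḟ₁ = f'(x₁)`
and `ḟᵢ₀ = f̃ᵢ₀`): there is `C = C(K, L, T)` such that the error is
`C·ĥ^{min(3,p+1)}` for `2 ≤ i ≤ l₀` and `C·ĥ^{min(3,p)}` for
`l₀ < i ≤ i₀ − 1`, where `l₀ = ⌊(i₀ − 2) + log₂ ĥ⌋ + 1`. -/
theorem left_subsystem_accuracy (K L T : ℝ) (hK : 0 < K) (hT : 0 < T) :
    ∃ C > 0, ∀ (p : ℝ), 0 < p →
      ∀ (n i0 : ℕ) (x : ℕ → ℝ) (f : ℝ → ℝ) (ftil hhat : ℝ) (df : ℕ → ℝ),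
      3 ≤ i0 → i0 ≤ n - 1 →
      (∀ i, 1 ≤ i → i ≤ n - 1 → x i < x (i + 1)) →
      hhat < 1 →
      (∀ i, 1 ≤ i → i ≤ n - 1 → hstep x i ≤ hhat) →
      (∃ i, 1 ≤ i ∧ i ≤ n - 1 ∧ hhat = hstep x i) →
      ContDiffOn ℝ 4 f (Set.Icc (x 1) (x i0)) →
      (∀ t ∈ Set.Icc (x 1) (x i0),
        |iteratedDerivWithin 4 f (Set.Icc (x 1) (x i0)) t| ≤ L) →
      (∀ j, 1 ≤ j → j ≤ i0 - 1 → hhat / hstep x j ≤ K) →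
      (3 : ℝ) - Real.logb 2 hhat < (i0 : ℝ) →
      |derivWithin f (Set.Icc (x 1) (x i0)) (x i0) - ftil| ≤ T * hhat ^ p →
      df 1 = derivWithin f (Set.Icc (x 1) (x i0)) (x 1) →
      df i0 = ftil →
      (∀ j, 2 ≤ j → j ≤ i0 - 1 →
        lamb x (j - 1) * df (j - 1) + 2 * df j + mub x (j - 1) * df (j + 1)
          = 3 * (lamb x (j - 1) * mslope x f (j - 1) + mub x (j - 1) * mslope x f j)) →
      (∀ i : ℕ, 2 ≤ i → (i : ℤ) ≤ ⌊(i0 : ℝ) - 2 + Real.logb 2 hhat⌋ + 1 →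
        |df i - derivWithin f (Set.Icc (x 1) (x i0)) (x i)|
          ≤ C * hhat ^ (min 3 (p + 1))) ∧
      (∀ i : ℕ, ⌊(i0 : ℝ) - 2 + Real.logb 2 hhat⌋ + 1 < (i : ℤ) → i ≤ i0 - 1 →
        |df i - derivWithin f (Set.Icc (x 1) (x i0)) (x i)|
          ≤ C * hhat ^ (min 3 p)) := by
  refine ⟨|L| + T, by positivity, ?_⟩
  intro p hp n i0 x f ftil hhat df hi03 hi0n hxlt hhat1 hhle hex hcd hLbd _hKbd hi0big hftil
    hdf1 hdfi0 hsys
  -- basic positivity facts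
  obtain ⟨iw, hiw1, hiwn, hiweq⟩ := hex
  have hhat0 : 0 < hhat := by
    rw [hiweq]; exact sub_pos.2 (hxlt iw hiw1 hiwn)
  -- monotonicity of nodes
  have hmono : ∀ b, b ≤ i0 → ∀ a, 1 ≤ a → a ≤ b → x a ≤ x b := by
    intro b
    induction b with
    | zero => intro _ a ha hab; omega
    | succ b ih =>
      intro hb a ha hab
      rcases Nat.lt_or_ge a (b+1) with hlt | hge
      · have hab' : a ≤ b := by omega
        have hb1 : 1 ≤ b := by omega
        have : x b < x (b+1) := hxlt b hb1 (by omega)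
        exact le_trans (ih (by omega) a ha hab') this.le
      · have : a = b + 1 := by omega
        rw [this]
  have hx1i0 : x 1 < x i0 := by
    have h12 : x 1 < x 2 := hxlt 1 le_rfl (by omega)
    exact lt_of_lt_of_le h12 (hmono i0 le_rfl 2 (by omega) (by omega))
  have hmem : ∀ j, 1 ≤ j → j ≤ i0 → x j ∈ Icc (x 1) (x i0) := by
    intro j h1 h2
    exact ⟨hmono j h2 1 le_rfl h1, hmono i0 le_rfl j h1 h2⟩
  set D := Icc (x 1) (x i0) with hD
  set g1 := derivWithin f D with hg1
  set e : ℕ → ℝ := fun i => df i - g1 (x i) with he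
  have hL0 : 0 ≤ L := le_trans (abs_nonneg _) (hLbd (x 1) (hmem 1 le_rfl (by omega)))
  set R := L * hhat^3 with hRdef
  set S := T * hhat ^ p with hSdef
  have hR0 : 0 ≤ R := by positivity
  have hS0 : 0 ≤ S := by positivity
  have hei0 : |e i0| ≤ S := by
    simp only [he, hdfi0]
    rw [abs_sub_comm]
    exact hftil
  have he1 : e 1 = 0 := by simp [he, hdf1]
  -- lambda/mu facts
  have hstep_pos : ∀ j, 1 ≤ j → j ≤ i0 - 1 → 0 < x (j+1) - x j := by
    intro j h1 h2
    exact sub_pos.2 (hxlt j h1 (by omega))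
  have hstep_le : ∀ j, 1 ≤ j → j ≤ i0 - 1 → x (j+1) - x j ≤ hhat := by
    intro j h1 h2
    exact hhle j h1 (by omega)
  -- residual bound
  have hres : ∀ j, 2 ≤ j → j ≤ i0 - 1 →
      |lamb x (j-1) * e (j-1) + 2 * e j + mub x (j-1) * e (j+1)| ≤ R := by
    intro j hj2 hj
    have hj1 : j - 1 + 1 = j := by omega
    set hh := x j - x (j-1) with hhdef
    set HH := x (j+1) - x j with hHHdef
    have hh0 : 0 < hh := by
      have := hstep_pos (j-1) (by omega) (by omega)
      rwa [hj1] at this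
    have hH0 : 0 < HH := hstep_pos j (by omega) hj
    have hhle' : hh ≤ hhat := by
      have := hstep_le (j-1) (by omega) (by omega)
      rwa [hj1] at this
    have hHle' : HH ≤ hhat := hstep_le j (by omega) hj
    have hlam : lamb x (j-1) = HH / (hh + HH) := by
      simp only [lamb, hstep, hj1, hhdef, hHHdef]
    have hmu : mub x (j-1) = hh / (hh + HH) := by
      simp only [mub, hstep, hj1, hhdef, hHHdef]
    have hsum0 : (0:ℝ) < hh + HH := by linarith
    have hlam0 : 0 ≤ lamb x (j-1) := by rw [hlam]; positivity
    have hmu0 : 0 ≤ mub x (j-1) := by rw [hmu]; positivity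
    have hlm1 : lamb x (j-1) + mub x (j-1) = 1 := by
      rw [hlam, hmu]; field_simp; ring
    have hlmθ : mub x (j-1) * HH = lamb x (j-1) * hh := by
      rw [hlam, hmu]; field_simp
    set c1 := g1 (x j) with hc1
    set c2 := iteratedDerivWithin 2 f D (x j) with hc2
    set c3 := iteratedDerivWithin 3 f D (x j) with hc3
    have hmemm : x (j-1) ∈ D := hmem (j-1) (by omega) (by omega)
    have hmemj : x j ∈ D := hmem j (by omega) (by omega)
    have hmemp : x (j+1) ∈ D := hmem (j+1) (by omega) (by omega)
    -- Taylor estimates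
    have hd1 : x (j-1) - x j = -hh := by rw [hhdef]; ring
    have hd2 : x (j+1) - x j = HH := rfl
    have hE1 : |mslope x f (j-1) - (c1 - c2*hh/2 + c3*hh^2/6)| ≤ L * hh^3/6 := by
      have ht := taylor3_bound hx1i0 hcd hLbd hmemj hmemm
      rw [hd1, abs_neg, abs_of_pos hh0] at ht
      have hms : mslope x f (j-1) = (f (x j) - f (x (j-1)))/hh := by
        simp only [mslope, hj1, hhdef]
      have heq : mslope x f (j-1) - (c1 - c2*hh/2 + c3*hh^2/6)
          = -(1/hh) * (f (x (j-1)) - f (x j) - g1 (x j) * (-hh)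
            - iteratedDerivWithin 2 f D (x j) * (-hh)^2/2
            - iteratedDerivWithin 3 f D (x j) * (-hh)^3/6) := by
        rw [hms, ← hc1, ← hc2, ← hc3]
        field_simp
        ring
      rw [heq, abs_mul, abs_neg, abs_of_pos (by positivity : (0:ℝ) < 1/hh)]
      calc 1/hh * |_| ≤ 1/hh * (L * hh^4/6) :=
            mul_le_mul_of_nonneg_left ht (by positivity)
        _ = L * hh^3/6 := by field_simp
    have hE2 : |mslope x f j - (c1 + c2*HH/2 + c3*HH^2/6)| ≤ L * HH^3/6 := by
      have ht := taylor3_bound hx1i0 hcd hLbd hmemj hmemp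
      rw [hd2, abs_of_pos hH0] at ht
      have hms : mslope x f j = (f (x (j+1)) - f (x j))/HH := by
        simp only [mslope, hHHdef]
      have heq : mslope x f j - (c1 + c2*HH/2 + c3*HH^2/6)
          = (1/HH) * (f (x (j+1)) - f (x j) - g1 (x j) * HH
            - iteratedDerivWithin 2 f D (x j) * HH^2/2
            - iteratedDerivWithin 3 f D (x j) * HH^3/6) := by
        rw [hms, ← hc1, ← hc2, ← hc3]
        field_simp
        ring
      rw [heq, abs_mul, abs_of_pos (by positivity : (0:ℝ) < 1/HH)]
      calc 1/HH * |_| ≤ 1/HH * (L * HH^4/6) :=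
            mul_le_mul_of_nonneg_left ht (by positivity)
        _ = L * HH^3/6 := by field_simp
    have hE3 : |g1 (x (j-1)) - (c1 - c2*hh + c3*hh^2/2)| ≤ L * hh^3/2 := by
      have ht := taylor2_deriv_bound hx1i0 hcd hLbd hmemj hmemm
      rw [hd1, abs_neg, abs_of_pos hh0] at ht
      have heq : g1 (x (j-1)) - (c1 - c2*hh + c3*hh^2/2)
          = g1 (x (j-1)) - g1 (x j)
            - iteratedDerivWithin 2 f D (x j) * (-hh)
            - iteratedDerivWithin 3 f D (x j) * (-hh)^2/2 := by
        rw [← hc1, ← hc2, ← hc3]; ring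
      rw [heq]
      exact ht
    have hE4 : |g1 (x (j+1)) - (c1 + c2*HH + c3*HH^2/2)| ≤ L * HH^3/2 := by
      have ht := taylor2_deriv_bound hx1i0 hcd hLbd hmemj hmemp
      rw [hd2, abs_of_pos hH0] at ht
      have heq : g1 (x (j+1)) - (c1 + c2*HH + c3*HH^2/2)
          = g1 (x (j+1)) - g1 (x j)
            - iteratedDerivWithin 2 f D (x j) * HH
            - iteratedDerivWithin 3 f D (x j) * HH^2/2 := by
        rw [← hc1, ← hc2, ← hc3]; ring
      rw [heq]
      exact ht
    -- combination identity
    have hs := hsys j hj2 hj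
    have hcomb : lamb x (j-1) * e (j-1) + 2 * e j + mub x (j-1) * e (j+1)
        = 3*(lamb x (j-1) * (mslope x f (j-1) - (c1 - c2*hh/2 + c3*hh^2/6))
           + mub x (j-1) * (mslope x f j - (c1 + c2*HH/2 + c3*HH^2/6)))
          - lamb x (j-1) * (g1 (x (j-1)) - (c1 - c2*hh + c3*hh^2/2))
          - mub x (j-1) * (g1 (x (j+1)) - (c1 + c2*HH + c3*HH^2/2)) := by
      simp only [he]
      linear_combination hs + 2*c1*hlm1 + (c2/2)*hlmθ
    rw [hcomb]
    have hb := comb_abs_bound hlam0 hmu0 hE1 hE2 hE3 hE4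
    have w1 : lamb x (j-1) * (L * hh^3) ≤ lamb x (j-1) * (L * hhat^3) :=
      mul_le_mul_of_nonneg_left
        (mul_le_mul_of_nonneg_left (pow_le_pow_left₀ hh0.le hhle' 3) hL0) hlam0
    have w2 : mub x (j-1) * (L * HH^3) ≤ mub x (j-1) * (L * hhat^3) :=
      mul_le_mul_of_nonneg_left
        (mul_le_mul_of_nonneg_left (pow_le_pow_left₀ hH0.le hHle' 3) hL0) hmu0
    have wsum : lamb x (j-1) * (L * hhat^3) + mub x (j-1) * (L * hhat^3) = L * hhat^3 := by
      linear_combination (L * hhat^3) * hlm1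
    calc |3*(lamb x (j-1) * (mslope x f (j-1) - (c1 - c2*hh/2 + c3*hh^2/6))
           + mub x (j-1) * (mslope x f j - (c1 + c2*HH/2 + c3*HH^2/6)))
          - lamb x (j-1) * (g1 (x (j-1)) - (c1 - c2*hh + c3*hh^2/2))
          - mub x (j-1) * (g1 (x (j+1)) - (c1 + c2*HH + c3*HH^2/2))|
        ≤ 3*(lamb x (j-1) * (L * hh^3/6) + mub x (j-1) * (L * HH^3/6))
          + lamb x (j-1) * (L * hh^3/2) + mub x (j-1) * (L * HH^3/2) := hb
      _ = lamb x (j-1) * (L * hh^3) + mub x (j-1) * (L * HH^3) := by ring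
      _ ≤ R := by rw [hRdef]; linarith
  -- λ/μ basic facts
  have hlm : ∀ j, 2 ≤ j → j ≤ i0 - 1 →
      0 ≤ lamb x (j-1) ∧ 0 ≤ mub x (j-1) ∧ lamb x (j-1) + mub x (j-1) = 1 := by
    intro j hj2 hj
    have hj1 : j - 1 + 1 = j := by omega
    have hh0 : 0 < x j - x (j-1) := by
      have := hstep_pos (j-1) (by omega) (by omega); rwa [hj1] at this
    have hH0 : 0 < x (j+1) - x j := hstep_pos j (by omega) hj
    have hlam : lamb x (j-1) = (x (j+1) - x j) / ((x j - x (j-1)) + (x (j+1) - x j)) := by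
      simp only [lamb, hstep, hj1]
    have hmu : mub x (j-1) = (x j - x (j-1)) / ((x j - x (j-1)) + (x (j+1) - x j)) := by
      simp only [mub, hstep, hj1]
    have hsum0 : (0:ℝ) < (x j - x (j-1)) + (x (j+1) - x j) := by linarith
    refine ⟨by rw [hlam]; exact div_nonneg hH0.le hsum0.le,
      by rw [hmu]; exact div_nonneg hh0.le hsum0.le, by
        rw [hlam, hmu, ← add_div, add_comm (x (j+1) - x j), div_self hsum0.ne']⟩
  -- discrete maximum principle bound
  set B : ℕ → ℝ := fun jj => R + S * (2:ℝ)^((jj:ℤ) - (i0:ℤ) + 1) with hB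
  have hzpos : ∀ z : ℤ, (0:ℝ) < (2:ℝ)^z := fun z => zpow_pos (by norm_num) z
  have hbd1 : |e 1| ≤ B 1 := by
    rw [he1, abs_zero, hB]
    have := (hzpos ((1:ℤ) - (i0:ℤ) + 1)).le
    positivity
  have hbdi0 : |e i0| ≤ B i0 := by
    have h2 : ((i0:ℤ) - (i0:ℤ) + 1) = 1 := by ring
    have hBi0 : B i0 = R + S * 2 := by rw [hB]; simp only [h2]; norm_num
    rw [hBi0]
    linarith [hei0, hS0, hR0]
  have hBmain : ∀ j, 1 ≤ j → j ≤ i0 → |e j| ≤ B j := by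
    have hint : ∀ j ∈ Finset.Icc 2 (i0-1), |e j| - B j ≤ 0 := by
      obtain ⟨j₀, hj₀mem, hmax⟩ := Finset.exists_max_image (Finset.Icc 2 (i0-1))
        (fun j => |e j| - B j) ⟨2, Finset.mem_Icc.2 ⟨le_rfl, by omega⟩⟩
      obtain ⟨hj₀2, hj₀u⟩ := Finset.mem_Icc.1 hj₀mem
      set ψ := |e j₀| - B j₀ with hψ
      suffices hψ0 : ψ ≤ 0 by
        intro j hj
        exact le_trans (hmax j hj) hψ0
      by_contra hcon
      push_neg at hcon
      have hnb : ∀ k, 1 ≤ k → k ≤ i0 → |e k| ≤ B k + ψ := by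
        intro k h1 h2
        rcases Nat.lt_or_ge k 2 with hk | hk
        · have : k = 1 := by omega
          subst this
          linarith [hbd1]
        rcases Nat.lt_or_ge k i0 with hk' | hk'
        · have := hmax k (Finset.mem_Icc.2 ⟨hk, by omega⟩)
          linarith
        · have : k = i0 := by omega
          subst this
          linarith [hbdi0]
      obtain ⟨hlam0, hmu0, hlm1⟩ := hlm j₀ hj₀2 hj₀u
      have hrow := hres j₀ hj₀2 hj₀u
      set lam := lamb x (j₀-1) with hlamd
      set mu := mub x (j₀-1) with hmud
      have f1 : lam * e (j₀-1) ≤ lam * |e (j₀-1)| :=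
        mul_le_mul_of_nonneg_left (le_abs_self _) hlam0
      have f2 : -(lam * |e (j₀-1)|) ≤ lam * e (j₀-1) := by
        have := mul_le_mul_of_nonneg_left (neg_abs_le (e (j₀-1))) hlam0
        rwa [mul_neg] at this
      have f3 : mu * e (j₀+1) ≤ mu * |e (j₀+1)| :=
        mul_le_mul_of_nonneg_left (le_abs_self _) hmu0
      have f4 : -(mu * |e (j₀+1)|) ≤ mu * e (j₀+1) := by
        have := mul_le_mul_of_nonneg_left (neg_abs_le (e (j₀+1))) hmu0
        rwa [mul_neg] at this
      have hrow' := abs_le.1 hrow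
      have t1 : |2 * e j₀| ≤ R + (lam * |e (j₀-1)| + mu * |e (j₀+1)|) := by
        rw [abs_le]
        constructor
        · linarith [hrow'.1]
        · linarith [hrow'.2]
      have habs2 : |2 * e j₀| = 2 * |e j₀| := by rw [abs_mul]; norm_num
      rw [habs2] at t1
      have hnbm := hnb (j₀-1) (by omega) (by omega)
      have hnbp := hnb (j₀+1) (by omega) (by omega)
      have g1' : lam * |e (j₀-1)| ≤ lam * B (j₀-1) + lam * ψ := by
        have := mul_le_mul_of_nonneg_left hnbm hlam0
        rwa [mul_add] at this
      have g2' : mu * |e (j₀+1)| ≤ mu * B (j₀+1) + mu * ψ := by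
        have := mul_le_mul_of_nonneg_left hnbp hmu0
        rwa [mul_add] at this
      set k : ℤ := (j₀:ℤ) - (i0:ℤ) + 1 with hk
      have hBm : B (j₀-1) = R + S * (2:ℝ)^(k-1) := by
        have hc : ((j₀-1:ℕ):ℤ) - (i0:ℤ) + 1 = k - 1 := by
          rw [Nat.cast_sub (by omega : 1 ≤ j₀)]; rw [hk]; ring
        simp only [hB]; rw [hc]
      have hBp : B (j₀+1) = R + S * (2:ℝ)^(k+1) := by
        have hc : ((j₀+1:ℕ):ℤ) - (i0:ℤ) + 1 = k + 1 := by
          push_cast; rw [hk]; ring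
        simp only [hB]; rw [hc]
      have hB0' : B j₀ = R + S * (2:ℝ)^k := by
        simp only [hB, hk]
      have hzk : (0:ℝ) < (2:ℝ)^k := hzpos k
      have hprod : 0 ≤ lam * (S * (2:ℝ)^k) := mul_nonneg hlam0 (mul_nonneg hS0 hzk.le)
      have hkey : R + (lam * B (j₀-1) + mu * B (j₀+1)) ≤ 2 * B j₀ := by
        rw [hBm, hBp, hB0']
        have h2a : (2:ℝ)^(k-1) = 2^k * 2⁻¹ := by
          rw [zpow_sub_one₀ (by norm_num : (2:ℝ) ≠ 0)]
        have h2b : (2:ℝ)^(k+1) = 2^k * 2 := by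
          rw [zpow_add_one₀ (by norm_num : (2:ℝ) ≠ 0)]
        have hineq : R + (lam*(R + S*(2:ℝ)^(k-1)) + mu*(R + S*(2:ℝ)^(k+1)))
            = 2*(R + S*(2:ℝ)^k) - (3/2)*(lam*(S*(2:ℝ)^k))
              + (R + 2*(S*(2:ℝ)^k))*(lam + mu - 1) := by
          rw [h2a, h2b]; ring
        rw [hineq, hlm1]
        have h0 : ((1:ℝ) - 1) = 0 := by norm_num
        rw [h0, mul_zero, add_zero]
        linarith [hprod]
      have hψsum : lam * ψ + mu * ψ = ψ := by linear_combination ψ * hlm1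
      have hψeq : |e j₀| = B j₀ + ψ := by rw [hψ]; ring
      linarith [t1, g1', g2', hkey, hψsum, hψeq]
    intro j h1 h2
    rcases Nat.lt_or_ge j 2 with hj | hj
    · have : j = 1 := by omega
      subst this; exact hbd1
    rcases Nat.lt_or_ge j i0 with hj' | hj'
    · have := hint j (Finset.mem_Icc.2 ⟨hj, by omega⟩)
      linarith
    · have : j = i0 := by omega
      subst this; exact hbdi0
  -- conclusions
  set l : ℤ := ⌊(i0:ℝ) - 2 + Real.logb 2 hhat⌋ with hl
  have hlogneg : Real.logb 2 hhat < 0 := Real.logb_neg (by norm_num) hhat0 hhat1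
  have hfl : l < (i0:ℤ) - 2 := by
    rw [hl]
    apply Int.floor_lt.2
    push_cast
    linarith
  have hfloor_le : (l:ℝ) ≤ (i0:ℝ) - 2 + Real.logb 2 hhat := Int.floor_le _
  have hl1 : 1 ≤ l := by
    rw [hl]
    apply Int.le_floor.2
    push_cast
    linarith
  have hrpow_nonneg : ∀ q : ℝ, 0 ≤ hhat ^ q := fun q => Real.rpow_nonneg hhat0.le q
  have hpow3 : L * hhat^(3:ℕ) ≤ |L| * hhat^((3:ℝ)) := by
    rw [show hhat ^ ((3:ℝ)) = hhat ^ (3:ℕ) by rw [← Real.rpow_natCast hhat 3]; norm_num]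
    exact mul_le_mul_of_nonneg_right (le_abs_self L) (by positivity)
  constructor
  · intro i hi2 hile
    have hb := hBmain i (by omega) (by omega)
    have h2le : (2:ℝ)^((i:ℤ) - (i0:ℤ) + 1) ≤ hhat := by
      calc (2:ℝ)^((i:ℤ) - (i0:ℤ) + 1) ≤ (2:ℝ)^(l - (i0:ℤ) + 2) :=
            zpow_le_zpow_right₀ (by norm_num) (by omega)
        _ = (2:ℝ)^(((l - (i0:ℤ) + 2 : ℤ) : ℝ)) := (Real.rpow_intCast 2 _).symm
        _ ≤ (2:ℝ)^(Real.logb 2 hhat) := by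
            apply Real.rpow_le_rpow_of_exponent_le (by norm_num)
            push_cast
            linarith [hfloor_le]
        _ = hhat := Real.rpow_logb (by norm_num) (by norm_num) hhat0
    have hbound2 : S * (2:ℝ)^((i:ℤ) - (i0:ℤ) + 1) ≤ T * hhat^(p+1) := by
      calc S * (2:ℝ)^((i:ℤ) - (i0:ℤ) + 1) ≤ S * hhat :=
            mul_le_mul_of_nonneg_left h2le hS0
        _ = T * hhat^(p+1) := by rw [hSdef, Real.rpow_add_one hhat0.ne']; ring
    have e1 : hhat ^ ((3:ℝ)) ≤ hhat ^ (min (3:ℝ) (p+1)) :=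
      Real.rpow_le_rpow_of_exponent_ge hhat0 hhat1.le (min_le_left _ _)
    have e2 : hhat ^ (p+1) ≤ hhat ^ (min (3:ℝ) (p+1)) :=
      Real.rpow_le_rpow_of_exponent_ge hhat0 hhat1.le (min_le_right _ _)
    have hgeq : df i - g1 (x i) = e i := rfl
    rw [hgeq]
    have hBieq : B i = R + S * (2:ℝ)^((i:ℤ) - (i0:ℤ) + 1) := rfl
    have q1 : L * hhat^(3:ℕ) ≤ |L| * hhat ^ (min (3:ℝ) (p+1)) :=
      le_trans hpow3 (mul_le_mul_of_nonneg_left e1 (abs_nonneg L))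
    have q2 : T * hhat^(p+1) ≤ T * hhat ^ (min (3:ℝ) (p+1)) :=
      mul_le_mul_of_nonneg_left e2 hT.le
    calc |e i| ≤ B i := hb
      _ = L * hhat^(3:ℕ) + S * (2:ℝ)^((i:ℤ) - (i0:ℤ) + 1) := by rw [hBieq, hRdef]
      _ ≤ |L| * hhat ^ (min (3:ℝ) (p+1)) + T * hhat ^ (min (3:ℝ) (p+1)) := by
          linarith [hbound2, q1, q2]
      _ = (|L| + T) * hhat ^ (min (3:ℝ) (p+1)) := by ring
  · intro i hgt hile
    have hb := hBmain i (by omega) (by omega)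
    have h2le : (2:ℝ)^((i:ℤ) - (i0:ℤ) + 1) ≤ 1 := by
      calc (2:ℝ)^((i:ℤ) - (i0:ℤ) + 1) ≤ (2:ℝ)^(0:ℤ) :=
            zpow_le_zpow_right₀ (by norm_num) (by omega)
        _ = 1 := by norm_num
    have hbound2 : S * (2:ℝ)^((i:ℤ) - (i0:ℤ) + 1) ≤ T * hhat^p := by
      calc S * (2:ℝ)^((i:ℤ) - (i0:ℤ) + 1) ≤ S * 1 :=
            mul_le_mul_of_nonneg_left h2le hS0
        _ = T * hhat^p := by rw [hSdef]; ring
    have e1 : hhat ^ ((3:ℝ)) ≤ hhat ^ (min (3:ℝ) p) :=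
      Real.rpow_le_rpow_of_exponent_ge hhat0 hhat1.le (min_le_left _ _)
    have e2 : hhat ^ p ≤ hhat ^ (min (3:ℝ) p) :=
      Real.rpow_le_rpow_of_exponent_ge hhat0 hhat1.le (min_le_right _ _)
    have hgeq : df i - g1 (x i) = e i := rfl
    rw [hgeq]
    have hBieq : B i = R + S * (2:ℝ)^((i:ℤ) - (i0:ℤ) + 1) := rfl
    have q1 : L * hhat^(3:ℕ) ≤ |L| * hhat ^ (min (3:ℝ) p) :=
      le_trans hpow3 (mul_le_mul_of_nonneg_left e1 (abs_nonneg L))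
    have q2 : T * hhat^p ≤ T * hhat ^ (min (3:ℝ) p) :=
      mul_le_mul_of_nonneg_left e2 hT.le
    calc |e i| ≤ B i := hb
      _ = L * hhat^(3:ℕ) + S * (2:ℝ)^((i:ℤ) - (i0:ℤ) + 1) := by rw [hBieq, hRdef]
      _ ≤ |L| * hhat ^ (min (3:ℝ) p) + T * hhat ^ (min (3:ℝ) p) := by
          linarith [hbound2, q1, q2]
      _ = (|L| + T) * hhat ^ (min (3:ℝ) p) := by ring
end
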